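/- arXiv:2506.09188 — 6 statements merged into one kernel-verified Lean document; each statement's English description precedes it below -/
import Mathlib

section
/- Single-timepoint interventional flip effects are weighted average treatment effects (Proposition 1): Assume E[f(X)] > 0. Then E[Y(D_f(1)) − Y(D_f(0))] / E[D_f(1) − D_f(0)] = E[E(Y(1) − Y(0) | X) · f(X)] / E[f(X)]; moreover E[D_f(1) − D_f(0)] = E[f(X)] and E[Y(D_f(1)) − Y(D_f(0))] = E[E(Y(1) − Y(0) | X) · f(X)]. -/
open MeasureTheory ProbabilityTheory

/-- **Proposition 1 (Interventional flip effects are WATEs).**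
Single-timepoint data `(X, A, Y(0), Y(1))`, a weight function `f : ℝ^d → [0,1]`, and an
auxiliary uniform `V ⟂ (X, A, Y(0), Y(1))`.  The flip interventions are
`D_f(0) = A·1{V > f(X)}` and `D_f(1) = A + (1-A)·1{V ≤ f(X)}`, and `Y(D) = D·Y(1)+(1-D)·Y(0)`.
If `E[f(X)] > 0` then the interventional flip effect equals the WATE; moreover
`E[D_f(1) - D_f(0)] = E[f(X)]` and
`E[Y(D_f(1)) - Y(D_f(0))] = E[E(Y(1)-Y(0) | X)·f(X)]`. -/
theorem flip_effect_is_WATE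
    {Ω : Type*} [MeasurableSpace Ω] (μ : Measure Ω) [IsProbabilityMeasure μ]
    (d : ℕ) (X : Ω → (Fin d → ℝ)) (A : Ω → ℝ) (Y0 Y1 : Ω → ℝ) (V : Ω → ℝ)
    (f : (Fin d → ℝ) → ℝ)
    (hX : Measurable X) (hA : Measurable A)
    (hAval : ∀ ω, A ω = 0 ∨ A ω = 1)
    (hY0m : Measurable Y0) (hY1m : Measurable Y1)
    (hY0 : Integrable Y0 μ) (hY1 : Integrable Y1 μ)
    (hfm : Measurable f) (hf01 : ∀ x, f x ∈ Set.Icc (0:ℝ) 1)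
    (hVm : Measurable V)
    (hVunif : Measure.map V μ = volume.restrict (Set.Icc (0:ℝ) 1))
    (hindep : IndepFun V (fun ω => (X ω, A ω, Y0 ω, Y1 ω)) μ)
    (D0 D1 YD0 YD1 : Ω → ℝ)
    (hD0 : D0 = fun ω => A ω * (if f (X ω) < V ω then 1 else 0))
    (hD1 : D1 = fun ω => A ω + (1 - A ω) * (if V ω ≤ f (X ω) then 1 else 0))
    (hYD0 : YD0 = fun ω => D0 ω * Y1 ω + (1 - D0 ω) * Y0 ω)
    (hYD1 : YD1 = fun ω => D1 ω * Y1 ω + (1 - D1 ω) * Y0 ω)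
    (hpos : 0 < ∫ ω, f (X ω) ∂μ) :
    (∫ ω, (YD1 ω - YD0 ω) ∂μ) / (∫ ω, (D1 ω - D0 ω) ∂μ)
      = (∫ ω, (μ[fun ω' => Y1 ω' - Y0 ω' | MeasurableSpace.comap X inferInstance]) ω
            * f (X ω) ∂μ) / (∫ ω, f (X ω) ∂μ)
    ∧ (∫ ω, (D1 ω - D0 ω) ∂μ) = ∫ ω, f (X ω) ∂μ
    ∧ (∫ ω, (YD1 ω - YD0 ω) ∂μ)
        = ∫ ω, (μ[fun ω' => Y1 ω' - Y0 ω' | MeasurableSpace.comap X inferInstance]) ω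
            * f (X ω) ∂μ := by
  classical
  set E := (Fin d → ℝ) × ℝ × ℝ × ℝ
  set W : Ω → E := fun ω => (X ω, A ω, Y0 ω, Y1 ω) with hWdef
  have hW : Measurable W := (hX.prodMk (hA.prodMk (hY0m.prodMk hY1m)))
  -- pointwise identities
  have hDdiff : ∀ ω, D1 ω - D0 ω = (if V ω ≤ f (X ω) then (1:ℝ) else 0) := by
    intro ω
    by_cases h : V ω ≤ f (X ω)
    · simp [hD0, hD1, h, not_lt.mpr h]
    · simp [hD0, hD1, h, not_le.mp h]
  have hYdiff : ∀ ω, YD1 ω - YD0 ω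
      = (if V ω ≤ f (X ω) then (1:ℝ) else 0) * (Y1 ω - Y0 ω) := by
    intro ω
    simp only [hYD0, hYD1]
    linear_combination (Y1 ω - Y0 ω) * hDdiff ω
  -- key independence lemma
  have hmap : Measure.map (fun ω => (W ω, V ω)) μ
      = (Measure.map W μ).prod (volume.restrict (Set.Icc (0:ℝ) 1)) := by
    rw [← hVunif]
    exact (indepFun_iff_map_prod_eq_prod_map_map hW.aemeasurable hVm.aemeasurable).mp hindep.symm
  have key : ∀ G : E → ℝ, Measurable G → Integrable (fun ω => G (W ω)) μ →
      (∫ ω, (if V ω ≤ f (X ω) then (1:ℝ) else 0) * G (W ω) ∂μ)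
        = ∫ ω, f (X ω) * G (W ω) ∂μ := by
    intro G hGm hGint
    set ν := Measure.map W μ with hν
    have : IsProbabilityMeasure ν := Measure.isProbabilityMeasure_map hW.aemeasurable
    have hGν : Integrable G ν := by
      rw [hν, integrable_map_measure hGm.aestronglyMeasurable hW.aemeasurable]
      exact hGint
    set H : E × ℝ → ℝ := fun p => (if p.2 ≤ f p.1.1 then (1:ℝ) else 0) * G p.1 with hH
    have hHm : Measurable H := by
      apply Measurable.mul
      · exact Measurable.ite (measurableSet_le measurable_snd
          (hfm.comp (measurable_fst.comp measurable_fst))) measurable_const measurable_const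
      · exact hGm.comp measurable_fst
    have hdom : Integrable (fun p : E × ℝ => G p.1 * 1)
        (ν.prod (volume.restrict (Set.Icc (0:ℝ) 1))) := hGν.mul_prod (integrable_const 1)
    have hHint : Integrable H (ν.prod (volume.restrict (Set.Icc (0:ℝ) 1))) := by
      refine Integrable.mono' (hdom.norm) hHm.aestronglyMeasurable ?_
      refine Filter.Eventually.of_forall fun p => ?_
      simp only [hH, norm_mul, mul_one, norm_norm]
      by_cases h : p.2 ≤ f p.1.1 <;> simp [h]
    have step1 : (∫ ω, (if V ω ≤ f (X ω) then (1:ℝ) else 0) * G (W ω) ∂μ)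
        = ∫ p, H p ∂(ν.prod (volume.restrict (Set.Icc (0:ℝ) 1))) := by
      rw [← hmap, integral_map (hW.aemeasurable.prodMk hVm.aemeasurable)
        hHm.aestronglyMeasurable]
    have inner : ∀ e : E, (∫ v, H (e, v) ∂(volume.restrict (Set.Icc (0:ℝ) 1)))
        = f e.1 * G e := by
      intro e
      have h1 : (∫ v, (if v ≤ f e.1 then (1:ℝ) else 0) ∂(volume.restrict (Set.Icc (0:ℝ) 1)))
          = f e.1 := by
        have hind : (fun v : ℝ => (if v ≤ f e.1 then (1:ℝ) else 0))
            = (Set.Iic (f e.1)).indicator 1 := by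
          funext v; simp [Set.indicator_apply, Set.mem_Iic]
        rw [hind, integral_indicator_one measurableSet_Iic,
          measureReal_def, Measure.restrict_apply measurableSet_Iic]
        have hset : Set.Iic (f e.1) ∩ Set.Icc (0:ℝ) 1 = Set.Icc 0 (f e.1) := by
          ext v
          constructor
          · rintro ⟨h1, h2, _⟩; exact ⟨h2, h1⟩
          · rintro ⟨h1, h2⟩; exact ⟨h2, h1, h2.trans (hf01 e.1).2⟩
        rw [hset, Real.volume_Icc, sub_zero, ENNReal.toReal_ofReal (hf01 e.1).1]
      calc (∫ v, H (e, v) ∂(volume.restrict (Set.Icc (0:ℝ) 1)))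
          = (∫ v, (if v ≤ f e.1 then (1:ℝ) else 0) ∂(volume.restrict (Set.Icc (0:ℝ) 1)))
            * G e := by rw [← integral_mul_const]
        _ = f e.1 * G e := by rw [h1]
    have step2 : (∫ p, H p ∂(ν.prod (volume.restrict (Set.Icc (0:ℝ) 1))))
        = ∫ e, f e.1 * G e ∂ν := by
      rw [integral_prod H hHint]
      exact integral_congr_ae (Filter.Eventually.of_forall fun e => inner e)
    have hmm : Measurable (fun e : E => f e.1 * G e) :=
      Measurable.mul (fun s hs => hfm.comp measurable_fst hs) hGm
    have step3 : (∫ e, f e.1 * G e ∂ν) = ∫ ω, f (X ω) * G (W ω) ∂μ := by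
      rw [hν, integral_map hW.aemeasurable hmm.aestronglyMeasurable]
    rw [step1, step2, step3]
  -- Part 2
  have hpart2 : (∫ ω, (D1 ω - D0 ω) ∂μ) = ∫ ω, f (X ω) ∂μ := by
    have := key (fun _ => 1) measurable_const (integrable_const 1)
    simp only [mul_one] at this
    simp only [hDdiff]
    exact this
  -- E[1{V≤f(X)}(Y1-Y0)] = E[f(X)(Y1-Y0)]
  have hY10 : (∫ ω, (YD1 ω - YD0 ω) ∂μ) = ∫ ω, f (X ω) * (Y1 ω - Y0 ω) ∂μ := by
    have := key (fun e => e.2.2.2 - e.2.2.1)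
      ((measurable_snd.comp (measurable_snd.comp measurable_snd)).sub
        (measurable_fst.comp (measurable_snd.comp measurable_snd)))
      (hY1.sub hY0)
    simp only [hYdiff]
    exact this
  -- conditional expectation step
  set m := MeasurableSpace.comap X inferInstance with hm'
  have hm : m ≤ _ := hX.comap_le
  have mX : Measurable[m] X := Measurable.of_comap_le le_rfl
  have hg_sm : StronglyMeasurable[m] (fun ω => f (X ω)) :=
    (hfm.comp mX).stronglyMeasurable
  have hZ : Integrable (fun ω' => Y1 ω' - Y0 ω') μ := hY1.sub hY0
  have hbound : ∀ᵐ ω ∂μ, ‖f (X ω)‖ ≤ 1 := by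
    refine Filter.Eventually.of_forall fun ω => ?_
    rw [Real.norm_eq_abs, abs_le]
    exact ⟨by linarith [(hf01 (X ω)).1], (hf01 (X ω)).2⟩
  have hcond := condExp_stronglyMeasurable_mul_of_bound (μ := μ) hm hg_sm hZ 1 hbound
  have hpart3 : (∫ ω, (YD1 ω - YD0 ω) ∂μ)
      = ∫ ω, (μ[fun ω' => Y1 ω' - Y0 ω' | m]) ω * f (X ω) ∂μ := by
    rw [hY10]
    have h1 : (∫ ω, f (X ω) * (Y1 ω - Y0 ω) ∂μ)
        = ∫ ω, (μ[(fun ω => f (X ω)) * (fun ω' => Y1 ω' - Y0 ω')|m]) ω ∂μ :=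
      (integral_condExp (μ := μ) (f := (fun ω => f (X ω)) * (fun ω' => Y1 ω' - Y0 ω')) hm).symm
    have h2 : (∫ ω, (μ[(fun ω => f (X ω)) * (fun ω' => Y1 ω' - Y0 ω')|m]) ω ∂μ)
        = ∫ ω, f (X ω) * (μ[fun ω' => Y1 ω' - Y0 ω'|m]) ω ∂μ := integral_congr_ae hcond
    rw [h1, h2]
    exact integral_congr_ae (Filter.Eventually.of_forall fun ω => mul_comm _ _)
  refine ⟨?_, hpart2, hpart3⟩
  rw [hpart2, hpart3]
end

section
/- Conditional interpretation of the single-timepoint interventional flip effect: Assume P(V ≤ f(X)) > 0. Then E[Y(D_f(1)) − Y(D_f(0))] / E[D_f(1) − D_f(0)] = E[Y(1) − Y(0) | V ≤ f(X)], and P(V ≤ f(X)) = E[f(X)]. -/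
open MeasureTheory ProbabilityTheory

/-- **Conditional interpretation of the single-timepoint interventional flip effect.**
With the flip interventions `D_f(0) = A·1{V > f(X)}`, `D_f(1) = A + (1-A)·1{V ≤ f(X)}` and
potential outcome `Y(D) = D·Y(1)+(1-D)·Y(0)`, if `P(V ≤ f(X)) > 0` then
`E[Y(D_f(1)) - Y(D_f(0))] / E[D_f(1) - D_f(0)] = E[Y(1) - Y(0) | V ≤ f(X)]`
and `P(V ≤ f(X)) = E[f(X)]`. -/
theorem flip_effect_conditional_interpretation
    {Ω : Type*} [MeasurableSpace Ω] (μ : Measure Ω) [IsProbabilityMeasure μ]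
    (d : ℕ) (X : Ω → (Fin d → ℝ)) (A : Ω → ℝ) (Y0 Y1 : Ω → ℝ) (V : Ω → ℝ)
    (f : (Fin d → ℝ) → ℝ)
    (hX : Measurable X) (hA : Measurable A)
    (hAval : ∀ ω, A ω = 0 ∨ A ω = 1)
    (hY0m : Measurable Y0) (hY1m : Measurable Y1)
    (hY0 : Integrable Y0 μ) (hY1 : Integrable Y1 μ)
    (hfm : Measurable f) (hf01 : ∀ x, f x ∈ Set.Icc (0:ℝ) 1)
    (hVm : Measurable V)
    (hVunif : Measure.map V μ = volume.restrict (Set.Icc (0:ℝ) 1))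
    (hindep : IndepFun V (fun ω => (X ω, A ω, Y0 ω, Y1 ω)) μ)
    (D0 D1 YD0 YD1 : Ω → ℝ)
    (hD0 : D0 = fun ω => A ω * (if f (X ω) < V ω then 1 else 0))
    (hD1 : D1 = fun ω => A ω + (1 - A ω) * (if V ω ≤ f (X ω) then 1 else 0))
    (hYD0 : YD0 = fun ω => D0 ω * Y1 ω + (1 - D0 ω) * Y0 ω)
    (hYD1 : YD1 = fun ω => D1 ω * Y1 ω + (1 - D1 ω) * Y0 ω)
    (hpos : 0 < μ {ω | V ω ≤ f (X ω)}) :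
    (∫ ω, (YD1 ω - YD0 ω) ∂μ) / (∫ ω, (D1 ω - D0 ω) ∂μ)
      = (∫ ω in {ω | V ω ≤ f (X ω)}, (Y1 ω - Y0 ω) ∂μ)
          / (μ {ω | V ω ≤ f (X ω)}).toReal
    ∧ (μ {ω | V ω ≤ f (X ω)}).toReal = ∫ ω, f (X ω) ∂μ := by
  set s : Set Ω := {ω | V ω ≤ f (X ω)} with hs_def
  have hs : MeasurableSet s := measurableSet_le hVm (hfm.comp hX)
  -- D1 - D0 = indicator of s
  have hD : ∀ ω, D1 ω - D0 ω = s.indicator (fun _ => (1:ℝ)) ω := by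
    intro ω
    simp only [hD0, hD1, Set.indicator, hs_def, Set.mem_setOf_eq]
    rcases hAval ω with h | h <;> by_cases hv : V ω ≤ f (X ω) <;>
      simp [h, hv, not_le.mpr, not_lt.mpr, not_le.1] <;> ring_nf <;>
      simp [if_neg (not_lt.mpr hv), if_pos (not_le.1 hv)]
  have hYD : ∀ ω, YD1 ω - YD0 ω = s.indicator (fun ω => Y1 ω - Y0 ω) ω := by
    intro ω
    have : YD1 ω - YD0 ω = (D1 ω - D0 ω) * (Y1 ω - Y0 ω) := by
      simp only [hYD0, hYD1]; ring
    rw [this, hD ω]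
    by_cases hω : ω ∈ s <;> simp [Set.indicator, hω]
  have hInt1 : (∫ ω, (YD1 ω - YD0 ω) ∂μ) = ∫ ω in s, (Y1 ω - Y0 ω) ∂μ := by
    rw [show (fun ω => YD1 ω - YD0 ω) = s.indicator (fun ω => Y1 ω - Y0 ω) from
      funext hYD]
    exact integral_indicator hs
  have hInt2 : (∫ ω, (D1 ω - D0 ω) ∂μ) = (μ s).toReal := by
    rw [show (fun ω => D1 ω - D0 ω) = s.indicator (fun _ => (1:ℝ)) from funext hD]
    rw [integral_indicator hs]
    simp
    rfl
  refine ⟨by rw [hInt1, hInt2], ?_⟩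
  -- second conjunct
  have hXV : IndepFun X V μ :=
    (hindep.comp measurable_id measurable_fst).symm
  have hmap : Measure.map (fun ω => (X ω, V ω)) μ
      = (Measure.map X μ).prod (Measure.map V μ) :=
    (indepFun_iff_map_prod_eq_prod_map_map hX.aemeasurable hVm.aemeasurable).1 hXV
  have hsetm : MeasurableSet {p : (Fin d → ℝ) × ℝ | p.2 ≤ f p.1} :=
    measurableSet_le (measurable_snd) (hfm.comp measurable_fst)
  have hμs : μ s = ∫⁻ x, ENNReal.ofReal (f x) ∂(Measure.map X μ) := by
    have h1 : μ s = Measure.map (fun ω => (X ω, V ω)) μ {p | p.2 ≤ f p.1} := by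
      rw [Measure.map_apply (hX.prodMk hVm) hsetm]
      rfl
    rw [h1, hmap, Measure.prod_apply hsetm]
    congr 1
    ext x
    have hfx := hf01 x
    have : (Prod.mk x ⁻¹' {p : (Fin d → ℝ) × ℝ | p.2 ≤ f p.1}) = Set.Iic (f x) := by
      ext v; simp [Set.mem_Iic]
    rw [this, hVunif, Measure.restrict_apply measurableSet_Iic]
    have : Set.Iic (f x) ∩ Set.Icc (0:ℝ) 1 = Set.Icc 0 (f x) := by
      ext v
      simp only [Set.mem_inter_iff, Set.mem_Iic, Set.mem_Icc]
      constructor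
      · rintro ⟨h1, h2, h3⟩; exact ⟨h2, h1⟩
      · rintro ⟨h1, h2⟩; exact ⟨h2, h1, h2.trans hfx.2⟩
    rw [this, Real.volume_Icc]
    simp
  have hmeas : Measurable fun ω => f (X ω) := hfm.comp hX
  have hint : Integrable (fun ω => f (X ω)) μ := by
    apply Integrable.mono' (integrable_const (1:ℝ)) hmeas.aestronglyMeasurable
    filter_upwards with ω
    have := hf01 (X ω)
    rw [Real.norm_eq_abs, abs_of_nonneg this.1]; exact this.2
  rw [hμs, MeasureTheory.lintegral_map (by
      exact Measurable.ennreal_ofReal hfm) hX]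
  rw [MeasureTheory.integral_eq_lintegral_of_nonneg_ae
    (Filter.Eventually.of_forall fun ω => (hf01 (X ω)).1) hmeas.aestronglyMeasurable]
end

section
/- Conditional means of the weight influence function (Lemma phi-first-order): (i) For every t ≤ T and b ∈ {0,1}, E[φ_t(b; A_t, H_t) | H_t] = 0 almost surely. (ii) If φ̂_t is defined by substituting an estimated conditional probability P̂(A_t = a_t | H_t) = (a measurable function of H_t with values in (0,1)) for P(A_t = a_t | H_t) in the formula for φ_t, then almost surely E[φ̂_t(b; A_t, H_t) | H_t] = (2·1{b = a_t} − 1)·(P(A_t = a_t | H_t) − P̂(A_t = a_t | H_t))·[1 − s_t(P̂(A_t = a_t | H_t)) + s_t′(P̂(A_t = a_t | H_t))·(1 − P̂(A_t = a_t | H_t))]. -/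
open MeasureTheory ProbabilityTheory

/-- **Conditional means of the weight influence function (Lemma phi-first-order).**
(i) `E[φ_t(b; A_t, H_t) | H_t] = 0` a.s.; (ii) with an estimated conditional probability
`p̂ t` (an `H_t`-measurable function with values in `(0,1)`) substituted into the formula
for `φ_t`, `E[φ̂_t(b; A_t, H_t) | H_t]` equals
`(2·1{b = a_t} - 1)·(P(A_t = a_t|H_t) - p̂)·[1 - s_t(p̂) + s_t'(p̂)(1 - p̂)]` a.s.
Times `1,…,T` of the paper are indexed by `0,…,T-1`. -/
theorem phi_first_order
    {Ω : Type*} [MeasurableSpace Ω] (μ : Measure Ω) [IsProbabilityMeasure μ]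
    (T d : ℕ) (hT : 1 ≤ T)
    (X : ℕ → Ω → (Fin d → ℝ)) (A : ℕ → Ω → Bool) (Y : Ω → ℝ)
    (hX : ∀ t, Measurable (X t)) (hA : ∀ t, Measurable (A t))
    (hY : MemLp Y 2 μ)
    (a : ℕ → Bool)
    (s : ℕ → ℝ → ℝ) (hs : ∀ t, ContDiff ℝ 2 (s t))
    (hsbdd : ∃ K, ∀ t x, |deriv (s t) x| ≤ K ∧ |deriv (deriv (s t)) x| ≤ K)
    (hs01 : ∀ t, ∀ x ∈ Set.Icc (0:ℝ) 1, s t x ∈ Set.Icc (0:ℝ) 1)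
    (H : ℕ → MeasurableSpace Ω)
    (hH : H = fun t =>
      (⨆ u ∈ Finset.range (t+1), MeasurableSpace.comap (X u) inferInstance)
        ⊔ (⨆ u ∈ Finset.range t, MeasurableSpace.comap (A u) inferInstance))
    (p : ℕ → Bool → Ω → ℝ)
    (hp : p = fun t b => μ[(fun ω => if A t ω = b then (1:ℝ) else 0) | H t])
    (φt : ℕ → Bool → Ω → ℝ)
    (hφt : φt = fun t b ω => (if b = a t then (1:ℝ) else -1)
      * ((if A t ω = a t then (1:ℝ) else 0) - p t (a t) ω)
      * (1 - s t (p t (a t) ω) + deriv (s t) (p t (a t) ω) * (1 - p t (a t) ω)))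
    (phat : ℕ → Ω → ℝ)
    (hphatmeas : ∀ t, Measurable[H t] (phat t))
    (hphat01 : ∀ t ω, phat t ω ∈ Set.Ioo (0:ℝ) 1)
    (φth : ℕ → Bool → Ω → ℝ)
    (hφth : φth = fun t b ω => (if b = a t then (1:ℝ) else -1)
      * ((if A t ω = a t then (1:ℝ) else 0) - phat t ω)
      * (1 - s t (phat t ω) + deriv (s t) (phat t ω) * (1 - phat t ω))) :
    (∀ t < T, ∀ b : Bool, μ[φt t b | H t] =ᵐ[μ] fun _ => (0:ℝ))
    ∧ (∀ t < T, ∀ b : Bool,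
        μ[φth t b | H t] =ᵐ[μ] fun ω => (if b = a t then (1:ℝ) else -1)
          * (p t (a t) ω - phat t ω)
          * (1 - s t (phat t ω) + deriv (s t) (phat t ω) * (1 - phat t ω))) := by
  -- the history σ-algebras are sub-σ-algebras of the ambient one
  have hm : ∀ t, H t ≤ ‹MeasurableSpace Ω› := by
    intro t; rw [hH]
    refine sup_le (iSup₂_le fun u _ => ?_) (iSup₂_le fun u _ => ?_)
    · exact measurable_iff_comap_le.mp (hX u)
    · exact measurable_iff_comap_le.mp (hA u)
  obtain ⟨K, hK⟩ := hsbdd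
  have hK0 : 0 ≤ K := le_trans (abs_nonneg _) (hK 0 0).1
  -- the indicator of the treatment event
  set I : ℕ → Ω → ℝ := fun t ω => if A t ω = a t then (1:ℝ) else 0 with hI
  have hImeas : ∀ t, Measurable (I t) := by
    intro t
    exact Measurable.ite ((hA t) (MeasurableSet.singleton (a t))) measurable_const
      measurable_const
  have hI01 : ∀ t ω, I t ω ∈ Set.Icc (0:ℝ) 1 := by
    intro t ω; simp only [hI]; split <;> norm_num
  have hIint : ∀ t, Integrable (I t) μ := by
    intro t
    refine (integrable_const (1:ℝ)).mono' (hImeas t).aestronglyMeasurable ?_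
    filter_upwards with ω
    rw [Real.norm_eq_abs, abs_le]
    exact ⟨by linarith [(hI01 t ω).1], (hI01 t ω).2⟩
  -- p is the conditional expectation of the indicator
  have hpdef : ∀ t, p t (a t) = μ[I t | H t] := by intro t; rw [hp]
  -- a.e. bounds on p
  have hp01 : ∀ t, ∀ᵐ ω ∂μ, p t (a t) ω ∈ Set.Icc (0:ℝ) 1 := by
    intro t
    have h0 : (0:Ω → ℝ) ≤ᵐ[μ] μ[I t | H t] :=
      condExp_nonneg (Filter.Eventually.of_forall fun ω => (hI01 t ω).1)
    have h1 : μ[I t | H t] ≤ᵐ[μ] fun _ => (1:ℝ) := by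
      have h := condExp_mono (μ := μ) (m := H t) (hIint t) (integrable_const (1:ℝ))
        (Filter.Eventually.of_forall fun ω => (hI01 t ω).2)
      rwa [condExp_const (hm t)] at h
    rw [hpdef]
    filter_upwards [h0, h1] with ω h0 h1
    exact ⟨h0, h1⟩
  -- bound on the "multiplier" function
  have hgbd : ∀ t (c : ℝ) (x : ℝ), |c| ≤ 1 → x ∈ Set.Icc (0:ℝ) 1 →
      ‖c * (1 - s t x + deriv (s t) x * (1 - x))‖ ≤ 1 + K := by
    intro t c x hc hx
    have hsx := hs01 t x hx
    have h1 : |1 - s t x| ≤ 1 := by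
      rw [abs_le]; constructor <;> [linarith [hsx.2]; linarith [hsx.1]]
    have h2 : |deriv (s t) x * (1 - x)| ≤ K := by
      rw [abs_mul]
      calc |deriv (s t) x| * |1 - x| ≤ K * 1 := by
            refine mul_le_mul (hK t x).1 ?_ (abs_nonneg _) hK0
            rw [abs_le]; constructor <;> [linarith [hx.2]; linarith [hx.1]]
        _ = K := mul_one K
    calc ‖c * (1 - s t x + deriv (s t) x * (1 - x))‖
        = |c| * |1 - s t x + deriv (s t) x * (1 - x)| := abs_mul _ _
      _ ≤ 1 * (1 + K) := by
          refine mul_le_mul hc ((abs_add_le _ _).trans (add_le_add h1 h2)) (abs_nonneg _)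
            zero_le_one
      _ = 1 + K := one_mul _
  have hc1 : ∀ (b : Bool) t, |(if b = a t then (1:ℝ) else -1)| ≤ 1 := by
    intro b t; split <;> norm_num
  -- continuity facts
  have hscont : ∀ t, Continuous (s t) := fun t => (hs t).continuous
  have hs'cont : ∀ t, Continuous (deriv (s t)) := fun t =>
    (hs t).continuous_deriv one_le_two
  constructor
  · -- part (i)
    intro t _ b
    set q : Ω → ℝ := p t (a t) with hq
    have hqsm : StronglyMeasurable[H t] q := by rw [hq, hpdef]; exact stronglyMeasurable_condExp
    set f : Ω → ℝ := fun ω => (if b = a t then (1:ℝ) else -1)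
      * (1 - s t (q ω) + deriv (s t) (q ω) * (1 - q ω)) with hf
    have hfsm : StronglyMeasurable[H t] f := by
      refine StronglyMeasurable.mul stronglyMeasurable_const ?_
      refine StronglyMeasurable.add (StronglyMeasurable.sub stronglyMeasurable_const
        ((hscont t).comp_stronglyMeasurable hqsm)) ?_
      exact StronglyMeasurable.mul ((hs'cont t).comp_stronglyMeasurable hqsm)
        (StronglyMeasurable.sub stronglyMeasurable_const hqsm)
    have hfbd : ∀ᵐ ω ∂μ, ‖f ω‖ ≤ 1 + K := by
      filter_upwards [hp01 t] with ω hω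
      exact hgbd t _ (q ω) (hc1 b t) hω
    have hgint : Integrable (fun ω => I t ω - q ω) μ := by
      rw [hq, hpdef]; exact (hIint t).sub integrable_condExp
    have key : μ[f * fun ω => I t ω - q ω | H t]
        =ᵐ[μ] f * μ[fun ω => I t ω - q ω | H t] :=
      condExp_stronglyMeasurable_mul_of_bound (hm t) hfsm hgint (1 + K) hfbd
    have hzero : μ[fun ω => I t ω - q ω | H t] =ᵐ[μ] fun _ => (0:ℝ) := by
      have h1 : μ[fun ω => I t ω - q ω | H t] =ᵐ[μ] μ[I t | H t] - μ[q | H t] :=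
        condExp_sub (m := H t) (hIint t) (by rw [hq, hpdef]; exact integrable_condExp)
      have h2 : μ[q | H t] =ᵐ[μ] q := by
        rw [hq, hpdef]
        exact condExp_condExp_of_le le_rfl (hm t)
      filter_upwards [h1, h2] with ω h1 h2
      rw [h1, Pi.sub_apply, h2, hq, hpdef]; exact sub_self _
    have heq : φt t b = f * fun ω => I t ω - q ω := by
      rw [hφt, hf, hq, hI]; funext ω; simp only [Pi.mul_apply]; ring
    rw [heq]
    filter_upwards [key, hzero] with ω h1 h2
    rw [h1, Pi.mul_apply, h2, mul_zero]
  · -- part (ii)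
    intro t _ b
    have hqsm : StronglyMeasurable[H t] (phat t) := (hphatmeas t).stronglyMeasurable
    have hq01 : ∀ ω, phat t ω ∈ Set.Icc (0:ℝ) 1 := fun ω =>
      ⟨le_of_lt (hphat01 t ω).1, le_of_lt (hphat01 t ω).2⟩
    set f : Ω → ℝ := fun ω => (if b = a t then (1:ℝ) else -1)
      * (1 - s t (phat t ω) + deriv (s t) (phat t ω) * (1 - phat t ω)) with hf
    have hfsm : StronglyMeasurable[H t] f := by
      refine StronglyMeasurable.mul stronglyMeasurable_const ?_
      refine StronglyMeasurable.add (StronglyMeasurable.sub stronglyMeasurable_const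
        ((hscont t).comp_stronglyMeasurable hqsm)) ?_
      exact StronglyMeasurable.mul ((hs'cont t).comp_stronglyMeasurable hqsm)
        (StronglyMeasurable.sub stronglyMeasurable_const hqsm)
    have hfbd : ∀ᵐ ω ∂μ, ‖f ω‖ ≤ 1 + K := by
      filter_upwards with ω
      exact hgbd t _ (phat t ω) (hc1 b t) (hq01 ω)
    have hqint : Integrable (phat t) μ := by
      refine (integrable_const (1:ℝ)).mono'
        ((hqsm.mono (hm t)).aestronglyMeasurable) ?_
      filter_upwards with ω
      rw [Real.norm_eq_abs, abs_le]
      exact ⟨by linarith [(hq01 ω).1], (hq01 ω).2⟩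
    have hgint : Integrable (fun ω => I t ω - phat t ω) μ := (hIint t).sub hqint
    have key : μ[f * fun ω => I t ω - phat t ω | H t]
        =ᵐ[μ] f * μ[fun ω => I t ω - phat t ω | H t] :=
      condExp_stronglyMeasurable_mul_of_bound (hm t) hfsm hgint (1 + K) hfbd
    have hcond : μ[fun ω => I t ω - phat t ω | H t]
        =ᵐ[μ] fun ω => p t (a t) ω - phat t ω := by
      have h1 : μ[fun ω => I t ω - phat t ω | H t] =ᵐ[μ] μ[I t | H t] - μ[phat t | H t] :=
        condExp_sub (m := H t) (hIint t) hqint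
      have h2 : μ[phat t | H t] = phat t :=
        condExp_of_stronglyMeasurable (hm t) hqsm hqint
      filter_upwards [h1] with ω h1
      rw [h1]; simp [h2, hpdef]
    have heq : φth t b = f * fun ω => I t ω - phat t ω := by
      rw [hφth, hf, hI]; funext ω; simp only [Pi.mul_apply]; ring
    rw [heq]
    filter_upwards [key, hcond] with ω h1 h2
    rw [h1, Pi.mul_apply, h2, hf]; ring
end

section
/- Exact second-order identity for the estimated intervention propensity score (content of Lemma phi-second-order): Let p = P(A_t = a_t | H_t) and let p̂ = P̂(A_t = a_t | H_t) be an estimated conditional probability (a measurable function of H_t with values in (0,1)); let Q̂_t and φ̂_t be defined by substituting p̂ for p in the formulas for Q_t and φ_t. Then for every b ∈ {0,1}, almost surely E[ φ̂_t(b; A_t, H_t) + Q̂_t(b | H_t) − Q_t(b | H_t) | H_t ] = (2·1{b = a_t} − 1)·[ (1 − p̂)·( s_t′(p̂)·(p − p̂) + s_t(p̂) − s_t(p) ) + ( s_t(p̂) − s_t(p) )·(p̂ − p) ]. -/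
open MeasureTheory ProbabilityTheory

set_option maxHeartbeats 1000000

/-- **Exact second-order identity for the estimated intervention propensity score
(Lemma phi-second-order).**  With `p = P(A_t = a_t | H_t)` and an estimated conditional
probability `p̂` (`H_t`-measurable, values in `(0,1)`) substituted into the formulas for
`Q_t` and `φ_t`, for every `b`:
`E[φ̂_t(b) + Q̂_t(b|H_t) - Q_t(b|H_t) | H_t]
  = (2·1{b=a_t}-1)·[(1-p̂)(s_t'(p̂)(p-p̂) + s_t(p̂) - s_t(p)) + (s_t(p̂)-s_t(p))(p̂-p)]` a.s.
Times `1,…,T` of the paper are indexed by `0,…,T-1`.  The estimated probability of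
treatment `b` is `p̂` if `b = a_t` and `1 - p̂` otherwise. -/
theorem phi_second_order
    {Ω : Type*} [MeasurableSpace Ω] (μ : Measure Ω) [IsProbabilityMeasure μ]
    (T d : ℕ) (hT : 1 ≤ T)
    (X : ℕ → Ω → (Fin d → ℝ)) (A : ℕ → Ω → Bool)
    (hX : ∀ t, Measurable (X t)) (hA : ∀ t, Measurable (A t))
    (a : ℕ → Bool)
    (s : ℕ → ℝ → ℝ) (hs : ∀ t, ContDiff ℝ 2 (s t))
    (hsbdd : ∃ K, ∀ t x, |deriv (s t) x| ≤ K ∧ |deriv (deriv (s t)) x| ≤ K)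
    (hs01 : ∀ t, ∀ x ∈ Set.Icc (0:ℝ) 1, s t x ∈ Set.Icc (0:ℝ) 1)
    (H : ℕ → MeasurableSpace Ω)
    (hH : H = fun t =>
      (⨆ u ∈ Finset.range (t+1), MeasurableSpace.comap (X u) inferInstance)
        ⊔ (⨆ u ∈ Finset.range t, MeasurableSpace.comap (A u) inferInstance))
    (p : ℕ → Bool → Ω → ℝ)
    (hp : p = fun t b => μ[(fun ω => if A t ω = b then (1:ℝ) else 0) | H t])
    (Q : ℕ → Bool → Ω → ℝ)
    (hQ : Q = fun t b ω => p t b ω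
      + (if b = a t then (1:ℝ) else -1) * s t (p t (a t) ω) * (1 - p t (a t) ω))
    (phat : ℕ → Ω → ℝ)
    (hphatmeas : ∀ t, Measurable[H t] (phat t))
    (hphat01 : ∀ t ω, phat t ω ∈ Set.Ioo (0:ℝ) 1)
    (phatb : ℕ → Bool → Ω → ℝ)
    (hphatb : phatb = fun t b ω => if b = a t then phat t ω else 1 - phat t ω)
    (Qhat : ℕ → Bool → Ω → ℝ)
    (hQhat : Qhat = fun t b ω => phatb t b ω
      + (if b = a t then (1:ℝ) else -1) * s t (phat t ω) * (1 - phat t ω))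
    (φth : ℕ → Bool → Ω → ℝ)
    (hφth : φth = fun t b ω => (if b = a t then (1:ℝ) else -1)
      * ((if A t ω = a t then (1:ℝ) else 0) - phat t ω)
      * (1 - s t (phat t ω) + deriv (s t) (phat t ω) * (1 - phat t ω))) :
    ∀ t < T, ∀ b : Bool,
      μ[(fun ω => φth t b ω + Qhat t b ω - Q t b ω) | H t]
        =ᵐ[μ] fun ω => (if b = a t then (1:ℝ) else -1)
          * ((1 - phat t ω)
              * (deriv (s t) (phat t ω) * (p t (a t) ω - phat t ω)
                  + s t (phat t ω) - s t (p t (a t) ω))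
            + (s t (phat t ω) - s t (p t (a t) ω)) * (phat t ω - p t (a t) ω)) := by
  intro t ht b
  classical
  obtain ⟨K, hK⟩ := hsbdd
  have hK0 : 0 ≤ K := le_trans (abs_nonneg _) (hK t 0).1
  -- H t is a sub-σ-algebra
  have hm : H t ≤ ‹MeasurableSpace Ω› := by
    rw [hH]
    refine sup_le ?_ ?_
    · exact iSup₂_le fun u _ => (hX u).comap_le
    · exact iSup₂_le fun u _ => (hA u).comap_le
  haveI : SigmaFinite (μ.trim hm) := by
    have : IsFiniteMeasure (μ.trim hm) := by
      constructor; rw [trim_measurableSet_eq hm MeasurableSet.univ]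
      exact measure_lt_top μ _
    infer_instance
  -- the indicator of the target action
  set I : Ω → ℝ := fun ω => if A t ω = a t then (1:ℝ) else 0 with hIdef
  have hImeas : Measurable I := by
    refine Measurable.ite ?_ measurable_const measurable_const
    exact hA t (measurableSet_singleton (a t))
  have hIbd : ∀ ω, |I ω| ≤ 1 := by
    intro ω; simp only [hIdef]; split <;> norm_num
  have hIint : Integrable I μ := by
    refine Integrable.mono' (integrable_const 1) hImeas.aestronglyMeasurable ?_
    filter_upwards with ω using by simpa using hIbd ω
  have hPdef : p t (a t) = μ[I | H t] := by rw [hp]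
  have hPsm : StronglyMeasurable[H t] (p t (a t)) := by
    rw [hPdef]; exact stronglyMeasurable_condExp
  have hP0 : 0 ≤ᵐ[μ] p t (a t) := by
    rw [hPdef]
    refine condExp_nonneg ?_
    filter_upwards with ω
    simp only [hIdef, Pi.zero_apply]; split <;> norm_num
  have hP1 : p t (a t) ≤ᵐ[μ] fun _ => (1:ℝ) := by
    rw [hPdef]
    have h1 : μ[I | H t] ≤ᵐ[μ] μ[fun _ => (1:ℝ) | H t] := by
      refine condExp_mono hIint (integrable_const 1) ?_
      filter_upwards with ω
      simp only [hIdef]; split <;> norm_num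
    rw [condExp_const hm] at h1
    exact h1
  -- continuity facts
  have hsc : Continuous (s t) := (hs t).continuous
  have hs'c : Continuous (deriv (s t)) := (hs t).continuous_deriv one_le_two
  have hphsm : StronglyMeasurable[H t] (phat t) := (hphatmeas t).stronglyMeasurable
  -- the factor g
  set g : Ω → ℝ := fun ω => 1 - s t (phat t ω) + deriv (s t) (phat t ω) * (1 - phat t ω)
    with hgdef
  have hgsm : StronglyMeasurable[H t] g := by
    refine StronglyMeasurable.add ?_ ?_
    · exact stronglyMeasurable_const.sub (hsc.comp_stronglyMeasurable hphsm)
    · exact (hs'c.comp_stronglyMeasurable hphsm).mul (stronglyMeasurable_const.sub hphsm)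
  have hphat01' : ∀ ω, phat t ω ∈ Set.Icc (0:ℝ) 1 := fun ω =>
    ⟨(hphat01 t ω).1.le, (hphat01 t ω).2.le⟩
  have hsphat01 : ∀ ω, s t (phat t ω) ∈ Set.Icc (0:ℝ) 1 := fun ω =>
    hs01 t _ (hphat01' ω)
  have hgbd : ∀ ω, |g ω| ≤ 2 + K := by
    intro ω
    have h1 : |1 - s t (phat t ω)| ≤ 1 := by
      rw [abs_le]; constructor <;> nlinarith [(hsphat01 ω).1, (hsphat01 ω).2]
    have h2 : |deriv (s t) (phat t ω) * (1 - phat t ω)| ≤ K := by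
      rw [abs_mul]
      have h3 : |1 - phat t ω| ≤ 1 := by
        rw [abs_le]; constructor <;> nlinarith [(hphat01' ω).1, (hphat01' ω).2]
      calc |deriv (s t) (phat t ω)| * |1 - phat t ω| ≤ K * 1 :=
            mul_le_mul (hK t _).1 h3 (abs_nonneg _) hK0
        _ = K := mul_one K
    calc |g ω| ≤ |1 - s t (phat t ω)| + |deriv (s t) (phat t ω) * (1 - phat t ω)| :=
          abs_add_le _ _
      _ ≤ 2 + K := by linarith
  set c : ℝ := if b = a t then (1:ℝ) else -1 with hcdef
  have hcbd : |c| = 1 := by rw [hcdef]; split <;> norm_num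
  -- decomposition f = (c*g)*I + h
  set h : Ω → ℝ := fun ω => -(c * phat t ω * g ω) + (Qhat t b ω - Q t b ω) with hhdef
  have hfeq : (fun ω => φth t b ω + Qhat t b ω - Q t b ω)
      = (fun ω => c * g ω) * I + h := by
    funext ω
    simp only [Pi.add_apply, Pi.mul_apply, hhdef, hφth, hgdef, hIdef, hcdef]
    ring
  -- measurability and integrability
  have hQhatsm : StronglyMeasurable[H t] (Qhat t b) := by
    rw [hQhat, hphatb]
    beta_reduce
    refine StronglyMeasurable.add ?_ ?_
    · split
      · exact hphsm
      · exact stronglyMeasurable_const.sub hphsm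
    · exact (stronglyMeasurable_const.mul (hsc.comp_stronglyMeasurable hphsm)).mul
        (stronglyMeasurable_const.sub hphsm)
  have hQhatbd : ∀ ω, |Qhat t b ω| ≤ 2 := by
    intro ω
    rw [hQhat, hphatb]
    beta_reduce
    have h1 : |if b = a t then phat t ω else 1 - phat t ω| ≤ 1 := by
      split <;> (rw [abs_le]; constructor <;> nlinarith [(hphat01' ω).1, (hphat01' ω).2])
    have h2 : |(if b = a t then (1:ℝ) else -1) * s t (phat t ω) * (1 - phat t ω)| ≤ 1 := by
      rw [abs_mul, abs_mul]
      have hc1 : |if b = a t then (1:ℝ) else -1| = 1 := by split <;> norm_num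
      rw [hc1, one_mul]
      have h3 : |1 - phat t ω| ≤ 1 := by
        rw [abs_le]; constructor <;> nlinarith [(hphat01' ω).1, (hphat01' ω).2]
      have h4 : |s t (phat t ω)| ≤ 1 := by
        rw [abs_le]; constructor <;> nlinarith [(hsphat01 ω).1, (hsphat01 ω).2]
      calc |s t (phat t ω)| * |1 - phat t ω| ≤ 1 * 1 :=
            mul_le_mul h4 h3 (abs_nonneg _) zero_le_one
        _ = 1 := one_mul 1
    calc |(if b = a t then phat t ω else 1 - phat t ω)
          + (if b = a t then (1:ℝ) else -1) * s t (phat t ω) * (1 - phat t ω)|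
        ≤ |if b = a t then phat t ω else 1 - phat t ω|
          + |(if b = a t then (1:ℝ) else -1) * s t (phat t ω) * (1 - phat t ω)| := abs_add_le _ _
      _ ≤ 2 := by linarith
  have hQhatint : Integrable (Qhat t b) μ := by
    refine Integrable.mono' (integrable_const 2)
      ((hQhatsm.mono hm).aestronglyMeasurable) ?_
    filter_upwards with ω using by simpa using hQhatbd ω
  have hpbsm : StronglyMeasurable[H t] (p t b) := by rw [hp]; exact stronglyMeasurable_condExp
  have hpbint : Integrable (p t b) μ := by rw [hp]; exact integrable_condExp
  have hsPsm : StronglyMeasurable[H t]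
      (fun ω => c * s t (p t (a t) ω) * (1 - p t (a t) ω)) :=
    (stronglyMeasurable_const.mul (hsc.comp_stronglyMeasurable hPsm)).mul
      (stronglyMeasurable_const.sub hPsm)
  have hsPint : Integrable (fun ω => c * s t (p t (a t) ω) * (1 - p t (a t) ω)) μ := by
    refine Integrable.mono' (integrable_const 1)
      ((hsPsm.mono hm).aestronglyMeasurable) ?_
    filter_upwards [hP0, hP1] with ω h0 h1
    simp only [Pi.zero_apply] at h0
    have hsP : s t (p t (a t) ω) ∈ Set.Icc (0:ℝ) 1 := hs01 t _ ⟨h0, h1⟩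
    have : |c * s t (p t (a t) ω) * (1 - p t (a t) ω)| ≤ 1 := by
      rw [abs_mul, abs_mul, hcbd, one_mul]
      have h3 : |1 - p t (a t) ω| ≤ 1 := by
        rw [abs_le]; constructor <;> nlinarith
      have h4 : |s t (p t (a t) ω)| ≤ 1 := by
        rw [abs_le]; constructor <;> nlinarith [hsP.1, hsP.2]
      calc |s t (p t (a t) ω)| * |1 - p t (a t) ω| ≤ 1 * 1 :=
            mul_le_mul h4 h3 (abs_nonneg _) zero_le_one
        _ = 1 := one_mul 1
    simp only [Real.norm_eq_abs]
    exact this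
  have hQsm : StronglyMeasurable[H t] (Q t b) := by
    rw [hQ]; exact hpbsm.add hsPsm
  have hQint : Integrable (Q t b) μ := by
    rw [hQ]; exact hpbint.add hsPint
  have hcpgsm : StronglyMeasurable[H t] (fun ω => -(c * phat t ω * g ω)) :=
    ((stronglyMeasurable_const.mul hphsm).mul hgsm).neg
  have hcpgint : Integrable (fun ω => -(c * phat t ω * g ω)) μ := by
    refine Integrable.mono' (integrable_const (2 + K))
      ((hcpgsm.mono hm).aestronglyMeasurable) ?_
    filter_upwards with ω
    have : |-(c * phat t ω * g ω)| ≤ 2 + K := by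
      rw [abs_neg, abs_mul, abs_mul, hcbd, one_mul]
      have h3 : |phat t ω| ≤ 1 := by
        rw [abs_le]; constructor <;> nlinarith [(hphat01' ω).1, (hphat01' ω).2]
      calc |phat t ω| * |g ω| ≤ 1 * (2 + K) :=
            mul_le_mul h3 (hgbd ω) (abs_nonneg _) zero_le_one
        _ = 2 + K := one_mul _
    simp only [Real.norm_eq_abs]
    exact this
  have hhsm : StronglyMeasurable[H t] h := by
    rw [hhdef]; exact hcpgsm.add (hQhatsm.sub hQsm)
  have hhint : Integrable h μ := by
    rw [hhdef]; exact hcpgint.add (hQhatint.sub hQint)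
  have hcgsm : StronglyMeasurable[H t] (fun ω => c * g ω) :=
    stronglyMeasurable_const.mul hgsm
  have hcgIint : Integrable ((fun ω => c * g ω) * I) μ := by
    refine Integrable.mono' (integrable_const (2 + K))
      (((hcgsm.mono hm).mul hImeas.stronglyMeasurable).aestronglyMeasurable) ?_
    filter_upwards with ω
    have : |c * g ω * I ω| ≤ 2 + K := by
      rw [abs_mul, abs_mul, hcbd, one_mul]
      calc |g ω| * |I ω| ≤ (2 + K) * 1 :=
            mul_le_mul (hgbd ω) (hIbd ω) (abs_nonneg _) (by linarith)
        _ = 2 + K := mul_one _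
    simp only [Real.norm_eq_abs]
    exact this
  -- the conditional expectation computation
  have hstep : μ[(fun ω => φth t b ω + Qhat t b ω - Q t b ω) | H t]
      =ᵐ[μ] fun ω => c * g ω * p t (a t) ω + h ω := by
    rw [hfeq]
    calc μ[(fun ω => c * g ω) * I + h | H t]
        =ᵐ[μ] μ[(fun ω => c * g ω) * I | H t] + μ[h | H t] := condExp_add hcgIint hhint _
      _ =ᵐ[μ] (fun ω => c * g ω) * μ[I | H t] + μ[h | H t] :=
          Filter.EventuallyEq.add (condExp_mul_of_stronglyMeasurable_left hcgsm hcgIint hIint)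
            Filter.EventuallyEq.rfl
      _ = (fun ω => c * g ω) * μ[I | H t] + h := by
          rw [condExp_of_stronglyMeasurable hm hhsm hhint]
      _ = fun ω => c * g ω * p t (a t) ω + h ω := by
          funext ω; rw [hPdef]; rfl
  refine hstep.trans ?_
  -- final algebra, split on whether b = a t
  by_cases hb : b = a t
  · filter_upwards with ω
    simp only [hhdef, hQhat, hQ, hphatb, hgdef, hcdef, hb, eq_self_iff_true, if_true]
    ring
  · have hpb1 : p t b =ᵐ[μ] fun ω => 1 - p t (a t) ω := by
      have hiff : ∀ x : Bool, (x = b) ↔ ¬(x = a t) := by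
        intro x
        constructor
        · rintro rfl; exact hb
        · intro hx
          exact (Bool.eq_not_iff.mpr hx).trans (Bool.eq_not_iff.mpr hb).symm
      have heq : (fun ω => if A t ω = b then (1:ℝ) else 0) = (fun _ => (1:ℝ)) - I := by
        funext ω
        simp only [Pi.sub_apply, hIdef, hiff (A t ω)]
        by_cases hA' : A t ω = a t <;> simp [hA']
      conv_lhs => rw [hp]
      simp only
      rw [heq]
      calc μ[(fun _ => (1:ℝ)) - I | H t]
          =ᵐ[μ] μ[fun _ => (1:ℝ) | H t] - μ[I | H t] := condExp_sub (integrable_const 1) hIint _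
        _ = fun ω => 1 - p t (a t) ω := by
            rw [condExp_const hm, hPdef]; funext ω; rfl
    filter_upwards [hpb1] with ω hω
    simp only [hhdef, hQhat, hQ, hphatb, hgdef, hcdef, if_neg hb]
    rw [hω]
    ring
end

section
/- Backwards-in-time error decomposition of the weight component: E[φ̂_Q(Z)] = Σ_{t=1}^{T} E[ ( ∏_{s=1}^{t−1} r̂_s(A_s | H_s) − ∏_{s=1}^{t−1} r_s(A_s | H_s) )·Σ_{b∈{0,1}} m̂_t(b, H_t)·E(φ̂_t(b; A_t, H_t) | H_t) ] + Σ_{t=1}^{T} E[ ( ∏_{s=1}^{t−1} r_s(A_s | H_s) )·Σ_{b} m̂_t(b, H_t)·( E(φ̂_t(b; A_t, H_t) | H_t) + Q̂_t(b | H_t) − Q_t(b | H_t) ) ] + Σ_{t=1}^{T} E[ ( ∏_{s=1}^{t−1} r_s(A_s | H_s) )·Σ_{b} m̂_t(b, H_t)·( Q_t(b | H_t) − Q̂_t(b | H_t) ) ]. -/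
open MeasureTheory ProbabilityTheory

section AuxLemmas

variable {Ω : Type*}

private lemma meas_bool_elim {m : MeasurableSpace Ω} {g : Bool → Ω → ℝ} {B : Ω → Bool}
    (hB : Measurable[m] B) (hg : ∀ b, Measurable[m] (g b)) :
    Measurable[m] (fun ω => g (B ω) ω) := by
  have h : (fun ω => g (B ω) ω) = fun ω => if B ω = true then g true ω else g false ω := by
    funext ω; cases hb : B ω <;> simp
  rw [h]
  exact Measurable.ite (hB (measurableSet_singleton true)) (hg true) (hg false)

private lemma abs_mul3 {a b c A B C : ℝ} (ha : |a| ≤ A) (hb : |b| ≤ B) (hc : |c| ≤ C) :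
    |a * b * c| ≤ A * B * C := by
  have h0a := (abs_nonneg a).trans ha
  have h0b := (abs_nonneg b).trans hb
  have h1 : |a * b| ≤ A * B := by
    rw [abs_mul]; exact mul_le_mul ha hb (abs_nonneg _) h0a
  rw [abs_mul]
  exact mul_le_mul h1 hc (abs_nonneg _) (by positivity)

private lemma abs_pair_bound {x mt mf ct cf X Cm Cc : ℝ}
    (hx : |x| ≤ X) (hmt : |mt| ≤ Cm) (hmf : |mf| ≤ Cm) (hct : |ct| ≤ Cc) (hcf : |cf| ≤ Cc) :
    |x * (mt * ct + mf * cf)| ≤ X * (2 * (Cm * Cc)) := by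
  have h0m := (abs_nonneg mt).trans hmt
  have h0c := (abs_nonneg ct).trans hct
  have h1 : |mt * ct| ≤ Cm * Cc := by rw [abs_mul]; exact mul_le_mul hmt hct (abs_nonneg _) h0m
  have h2 : |mf * cf| ≤ Cm * Cc := by rw [abs_mul]; exact mul_le_mul hmf hcf (abs_nonneg _) h0m
  rw [abs_mul]
  exact mul_le_mul hx ((abs_add_le _ _).trans (by linarith)) (abs_nonneg _) ((abs_nonneg _).trans hx)

end AuxLemmas

/-- **Backwards-in-time error decomposition of the weight component.**
Times `1,…,T` of the paper are indexed by `0,…,T-1`; the paper's products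
`∏_{s=1}^{t-1}` correspond to products over `Finset.range t`. -/
theorem backwards_in_time_Q_decomposition
    {Ω : Type*} [MeasurableSpace Ω] (μ : Measure Ω) [IsProbabilityMeasure μ]
    (T d : ℕ) (hT : 1 ≤ T)
    (X : ℕ → Ω → (Fin d → ℝ)) (A : ℕ → Ω → Bool) (Y : Ω → ℝ)
    (hX : ∀ t, Measurable (X t)) (hA : ∀ t, Measurable (A t))
    (hY : MemLp Y 2 μ)
    (a : ℕ → Bool)
    (s : ℕ → ℝ → ℝ) (hs : ∀ t, ContDiff ℝ 2 (s t))
    (hsbdd : ∃ K, ∀ t x, |deriv (s t) x| ≤ K ∧ |deriv (deriv (s t)) x| ≤ K)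
    (hs01 : ∀ t, ∀ x ∈ Set.Icc (0:ℝ) 1, s t x ∈ Set.Icc (0:ℝ) 1)
    (H : ℕ → MeasurableSpace Ω)
    (hH : H = fun t =>
      (⨆ u ∈ Finset.range (t+1), MeasurableSpace.comap (X u) inferInstance)
        ⊔ (⨆ u ∈ Finset.range t, MeasurableSpace.comap (A u) inferInstance))
    (p : ℕ → Bool → Ω → ℝ)
    (hp : p = fun t b => μ[(fun ω => if A t ω = b then (1:ℝ) else 0) | H t])
    (Q : ℕ → Bool → Ω → ℝ)
    (hQ : Q = fun t b ω => p t b ω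
      + (if b = a t then (1:ℝ) else -1) * s t (p t (a t) ω) * (1 - p t (a t) ω))
    (r : ℕ → Ω → ℝ)
    (hr : r = fun t ω => Q t (A t ω) ω / p t (A t ω) ω)
    (hrbdd : ∃ K, ∀ t, ∀ᵐ ω ∂μ, |r t ω| ≤ K)
    (pihat : ℕ → Ω → ℝ)
    (hpihatmeas : ∀ t, Measurable[H t] (pihat t))
    (hpihat01 : ∀ t ω, pihat t ω ∈ Set.Ioo (0:ℝ) 1)
    (phatb : ℕ → Bool → Ω → ℝ)
    (hphatb : phatb = fun t b ω => if b then pihat t ω else 1 - pihat t ω)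
    (Qhat : ℕ → Bool → Ω → ℝ)
    (hQhat : Qhat = fun t b ω => phatb t b ω
      + (if b = a t then (1:ℝ) else -1) * s t (phatb t (a t) ω) * (1 - phatb t (a t) ω))
    (rhat : ℕ → Ω → ℝ)
    (hrhat : rhat = fun t ω => Qhat t (A t ω) ω / phatb t (A t ω) ω)
    (hrhatbdd : ∃ K, ∀ t, ∀ᵐ ω ∂μ, |rhat t ω| ≤ K)
    (mhat : ℕ → Bool → Ω → ℝ)
    (hmhatmeas : ∀ t < T, ∀ b, Measurable[H t] (mhat t b))
    (hmhatbdd : ∃ C, ∀ t < T, ∀ b, ∀ᵐ ω ∂μ, |mhat t b ω| ≤ C)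
    (φth : ℕ → Bool → Ω → ℝ)
    (hφth : φth = fun t b ω => (if b = a t then (1:ℝ) else -1)
      * ((if A t ω = a t then (1:ℝ) else 0) - phatb t (a t) ω)
      * (1 - s t (phatb t (a t) ω)
          + deriv (s t) (phatb t (a t) ω) * (1 - phatb t (a t) ω)))
    (φQh : Ω → ℝ)
    (hφQh : φQh = fun ω => ∑ t ∈ Finset.range T, (∏ u ∈ Finset.range t, rhat u ω)
      * ∑ b : Bool, mhat t b ω * φth t b ω) :
    ∫ ω, φQh ω ∂μ
      = (∑ t ∈ Finset.range T, ∫ ω,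
          ((∏ u ∈ Finset.range t, rhat u ω) - (∏ u ∈ Finset.range t, r u ω))
            * ∑ b : Bool, mhat t b ω * (μ[φth t b | H t]) ω ∂μ)
      + (∑ t ∈ Finset.range T, ∫ ω, (∏ u ∈ Finset.range t, r u ω)
            * ∑ b : Bool, mhat t b ω
                * ((μ[φth t b | H t]) ω + Qhat t b ω - Q t b ω) ∂μ)
      + ∑ t ∈ Finset.range T, ∫ ω, (∏ u ∈ Finset.range t, r u ω)
            * ∑ b : Bool, mhat t b ω * (Q t b ω - Qhat t b ω) ∂μ := by
  classical
  obtain ⟨K, hK⟩ := hsbdd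
  obtain ⟨Kr, hKr⟩ := hrbdd
  obtain ⟨Kh, hKh⟩ := hrhatbdd
  obtain ⟨Cm, hCm⟩ := hmhatbdd
  have hK0 : 0 ≤ K := (abs_nonneg _).trans (hK 0 0).1
  haveI : (ae μ).NeBot := ae_neBot.2 (IsProbabilityMeasure.ne_zero μ)
  have hKr0 : 0 ≤ Kr := by
    obtain ⟨ω, hω⟩ := (hKr 0).exists
    exact (abs_nonneg _).trans hω
  have hKh0 : 0 ≤ Kh := by
    obtain ⟨ω, hω⟩ := (hKh 0).exists
    exact (abs_nonneg _).trans hω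
  have hCm0 : 0 ≤ Cm := by
    obtain ⟨ω, hω⟩ := (hCm 0 hT true).exists
    exact (abs_nonneg _).trans hω
  -- σ-algebra facts
  have hHle : ∀ t, H t ≤ ‹MeasurableSpace Ω› := by
    intro t; simp only [hH]
    apply sup_le
    · exact iSup_le fun u => iSup_le fun _ => (hX u).comap_le
    · exact iSup_le fun u => iSup_le fun _ => (hA u).comap_le
  have hHmono : ∀ u t : ℕ, u ≤ t → H u ≤ H t := by
    intro u t hut; simp only [hH]
    apply sup_le_sup
    · exact iSup_le fun v => iSup_le fun hv =>
        le_iSup₂ (f := fun v (_ : v ∈ Finset.range (t+1)) =>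
          MeasurableSpace.comap (X v) inferInstance) v
          (Finset.mem_range.mpr (lt_of_lt_of_le (Finset.mem_range.mp hv) (by omega)))
    · exact iSup_le fun v => iSup_le fun hv =>
        le_iSup₂ (f := fun v (_ : v ∈ Finset.range t) =>
          MeasurableSpace.comap (A v) inferInstance) v
          (Finset.mem_range.mpr (lt_of_lt_of_le (Finset.mem_range.mp hv) (by omega)))
  have hAH : ∀ u t : ℕ, u < t → Measurable[H t] (A u) := by
    intro u t hut
    refine Measurable.of_comap_le ?_
    simp only [hH]
    exact le_trans
      (le_iSup₂ (f := fun v (_ : v ∈ Finset.range t) =>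
        MeasurableSpace.comap (A v) inferInstance) u (Finset.mem_range.mpr hut)) le_sup_right
  -- measurability of nuisance pieces
  have hpiH : ∀ u t : ℕ, u ≤ t → Measurable[H t] (pihat u) :=
    fun u t h => (hpihatmeas u).mono (hHmono u t h) le_rfl
  have hphH : ∀ u t : ℕ, ∀ b, u ≤ t → Measurable[H t] (phatb u b) := by
    intro u t b h; simp only [hphatb]; cases b
    · simp only [Bool.false_eq_true, if_false]; exact measurable_const.sub (hpiH u t h)
    · simpa using hpiH u t h
  have hscont : ∀ t, Continuous (s t) := fun t => (hs t).continuous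
  have hs'cont : ∀ t, Continuous (deriv (s t)) := fun t => (hs t).continuous_deriv (by norm_num)
  have hQhH : ∀ u t : ℕ, ∀ b, u ≤ t → Measurable[H t] (Qhat u b) := by
    intro u t b h; simp only [hQhat]
    exact (hphH u t b h).add
      ((measurable_const.mul ((hscont u).measurable.comp (hphH u t (a u) h))).mul
        (measurable_const.sub (hphH u t (a u) h)))
  have hrhH : ∀ u t : ℕ, u < t → Measurable[H t] (rhat u) := by
    intro u t h; simp only [hrhat]
    exact Measurable.div (meas_bool_elim (hAH u t h) (fun b => hQhH u t b h.le))
      (meas_bool_elim (hAH u t h) (fun b => hphH u t b h.le))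
  have hrhatMeas : ∀ u, Measurable (rhat u) :=
    fun u => (hrhH u (u+1) (by omega)).mono (hHle (u+1)) le_rfl
  have hpMeas : ∀ t b, Measurable (p t b) := by
    intro t b; simp only [hp]
    exact stronglyMeasurable_condExp.measurable.mono (hHle t) le_rfl
  have hQMeas : ∀ t b, Measurable (Q t b) := by
    intro t b; simp only [hQ]
    exact (hpMeas t b).add
      ((measurable_const.mul ((hscont t).measurable.comp (hpMeas t (a t)))).mul
        (measurable_const.sub (hpMeas t (a t))))
  have hrMeas : ∀ t, Measurable (r t) := by
    intro t; simp only [hr]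
    exact Measurable.div (meas_bool_elim (hA t) (fun b => hQMeas t b))
      (meas_bool_elim (hA t) (fun b => hpMeas t b))
  have hphAmb : ∀ t b, Measurable (phatb t b) := fun t b => (hphH t t b le_rfl).mono (hHle t) le_rfl
  have hQhatAmb : ∀ t b, Measurable (Qhat t b) := fun t b => (hQhH t t b le_rfl).mono (hHle t) le_rfl
  have hφMeas : ∀ t b, Measurable (φth t b) := by
    intro t b; simp only [hφth]
    have hind : Measurable fun ω => if A t ω = a t then (1:ℝ) else 0 :=
      Measurable.ite ((hA t) (measurableSet_singleton (a t))) measurable_const measurable_const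
    exact ((measurable_const.mul (hind.sub (hphAmb t (a t)))).mul
      ((measurable_const.sub ((hscont t).measurable.comp (hphAmb t (a t)))).add
        (((hs'cont t).measurable.comp (hphAmb t (a t))).mul
          (measurable_const.sub (hphAmb t (a t))))))
  -- pointwise bounds
  have hph01 : ∀ t b ω, phatb t b ω ∈ Set.Ioo (0:ℝ) 1 := by
    intro t b ω; simp only [hphatb]
    rcases hpihat01 t ω with ⟨h1, h2⟩
    cases b
    · simp only [Bool.false_eq_true, if_false]
      exact Set.mem_Ioo.2 ⟨sub_pos.mpr h2, sub_lt_self 1 h1⟩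
    · simp only [if_true]; exact Set.mem_Ioo.2 ⟨h1, h2⟩
  have hφbdd : ∀ t b ω, |φth t b ω| ≤ 1 + K := by
    intro t b ω; simp only [hφth]
    obtain ⟨hx0, hx1⟩ := hph01 t (a t) ω
    obtain ⟨hsx0, hsx1⟩ := hs01 t (phatb t (a t) ω) ⟨hx0.le, hx1.le⟩
    have h1 : |(if b = a t then (1:ℝ) else -1)| ≤ 1 := by split <;> simp
    have h2 : |(if A t ω = a t then (1:ℝ) else 0) - phatb t (a t) ω| ≤ 1 := by
      split <;> (rw [abs_le]; constructor <;> linarith)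
    have h3 : |1 - s t (phatb t (a t) ω)
        + deriv (s t) (phatb t (a t) ω) * (1 - phatb t (a t) ω)| ≤ 1 + K := by
      have hd := (hK t (phatb t (a t) ω)).1
      have h4 : |1 - s t (phatb t (a t) ω)| ≤ 1 := by rw [abs_le]; constructor <;> linarith
      have h5 : |deriv (s t) (phatb t (a t) ω) * (1 - phatb t (a t) ω)| ≤ K := by
        rw [abs_mul]
        calc |deriv (s t) (phatb t (a t) ω)| * |1 - phatb t (a t) ω| ≤ K * 1 :=
              mul_le_mul hd (by rw [abs_le]; constructor <;> linarith) (abs_nonneg _) hK0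
          _ = K := mul_one K
      exact (abs_add_le _ _).trans (add_le_add h4 h5)
    calc |(if b = a t then (1:ℝ) else -1)
          * ((if A t ω = a t then (1:ℝ) else 0) - phatb t (a t) ω)
          * (1 - s t (phatb t (a t) ω)
              + deriv (s t) (phatb t (a t) ω) * (1 - phatb t (a t) ω))|
        ≤ 1 * 1 * (1 + K) := abs_mul3 h1 h2 h3
      _ = 1 + K := by ring
  have hQhatbdd : ∀ t b ω, |Qhat t b ω| ≤ 2 := by
    intro t b ω; simp only [hQhat]
    obtain ⟨hx0, hx1⟩ := hph01 t (a t) ω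
    obtain ⟨hb0, hb1⟩ := hph01 t b ω
    obtain ⟨hsx0, hsx1⟩ := hs01 t (phatb t (a t) ω) ⟨hx0.le, hx1.le⟩
    have hc : |(if b = a t then (1:ℝ) else -1)| ≤ 1 := by split <;> simp
    have hsb : |s t (phatb t (a t) ω)| ≤ 1 := abs_le.2 ⟨by linarith, hsx1⟩
    have hv : |1 - phatb t (a t) ω| ≤ 1 := abs_le.2 ⟨by linarith, by linarith⟩
    have h6 := abs_mul3 hc hsb hv
    have h7 : |phatb t b ω| ≤ 1 := abs_le.2 ⟨by linarith, hb1.le⟩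
    calc |phatb t b ω + (if b = a t then (1:ℝ) else -1) * s t (phatb t (a t) ω)
          * (1 - phatb t (a t) ω)|
        ≤ |phatb t b ω| + |(if b = a t then (1:ℝ) else -1) * s t (phatb t (a t) ω)
          * (1 - phatb t (a t) ω)| := abs_add_le _ _
      _ ≤ 1 + 1 * 1 * 1 := add_le_add h7 h6
      _ = 2 := by ring
  have hp01ae : ∀ t b, ∀ᵐ ω ∂μ, p t b ω ∈ Set.Icc (0:ℝ) 1 := by
    intro t b; simp only [hp]
    have hmeasInd : Measurable fun ω => if A t ω = b then (1:ℝ) else 0 :=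
      Measurable.ite ((hA t) (measurableSet_singleton b)) measurable_const measurable_const
    have hint : Integrable (fun ω => if A t ω = b then (1:ℝ) else 0) μ := by
      refine Integrable.mono' (integrable_const 1) hmeasInd.aestronglyMeasurable ?_
      filter_upwards with ω
      rw [Real.norm_eq_abs]; split <;> norm_num
    have h0 : 0 ≤ᵐ[μ] μ[(fun ω => if A t ω = b then (1:ℝ) else 0)|H t] :=
      condExp_nonneg (Filter.Eventually.of_forall fun ω => by
        by_cases h : A t ω = b <;> simp [h])
    have h1 : μ[(fun ω => if A t ω = b then (1:ℝ) else 0)|H t]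
        ≤ᵐ[μ] μ[(fun _ => (1:ℝ))|H t] :=
      condExp_mono hint (integrable_const 1)
        (Filter.Eventually.of_forall fun ω => by by_cases h : A t ω = b <;> simp [h])
    have h2 : μ[(fun _ => (1:ℝ))|H t] = fun _ => 1 := condExp_const (hHle t) 1
    filter_upwards [h0, h1] with ω ha hb
    refine ⟨ha, ?_⟩
    rw [h2] at hb; exact hb
  have hQbdd : ∀ t b, ∀ᵐ ω ∂μ, |Q t b ω| ≤ 2 := by
    intro t b
    filter_upwards [hp01ae t b, hp01ae t (a t)] with ω h1 h2
    simp only [hQ]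
    obtain ⟨u0, u1⟩ := h1; obtain ⟨v0, v1⟩ := h2
    obtain ⟨w0, w1⟩ := hs01 t (p t (a t) ω) ⟨v0, v1⟩
    have hc : |(if b = a t then (1:ℝ) else -1)| ≤ 1 := by split <;> simp
    have hsb : |s t (p t (a t) ω)| ≤ 1 := abs_le.2 ⟨by linarith, w1⟩
    have hv : |1 - p t (a t) ω| ≤ 1 := abs_le.2 ⟨by linarith, by linarith⟩
    have h6 := abs_mul3 hc hsb hv
    have h7 : |p t b ω| ≤ 1 := abs_le.2 ⟨by linarith, u1⟩
    calc |p t b ω + (if b = a t then (1:ℝ) else -1) * s t (p t (a t) ω) * (1 - p t (a t) ω)|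
        ≤ |p t b ω| + |(if b = a t then (1:ℝ) else -1) * s t (p t (a t) ω)
            * (1 - p t (a t) ω)| := abs_add_le _ _
      _ ≤ 1 + 1 * 1 * 1 := add_le_add h7 h6
      _ = 2 := by ring
  -- product bounds
  have hRhatB : ∀ t : ℕ, ∀ᵐ ω ∂μ, |∏ u ∈ Finset.range t, rhat u ω| ≤ Kh ^ t := by
    intro t
    filter_upwards [ae_all_iff.2 hKh] with ω hω
    rw [Finset.abs_prod]
    calc ∏ u ∈ Finset.range t, |rhat u ω| ≤ ∏ u ∈ Finset.range t, Kh :=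
          Finset.prod_le_prod (fun i _ => abs_nonneg _) (fun i _ => hω i)
      _ = Kh ^ t := by simp
  have hRB : ∀ t : ℕ, ∀ᵐ ω ∂μ, |∏ u ∈ Finset.range t, r u ω| ≤ Kr ^ t := by
    intro t
    filter_upwards [ae_all_iff.2 hKr] with ω hω
    rw [Finset.abs_prod]
    calc ∏ u ∈ Finset.range t, |r u ω| ≤ ∏ u ∈ Finset.range t, Kr :=
          Finset.prod_le_prod (fun i _ => abs_nonneg _) (fun i _ => hω i)
      _ = Kr ^ t := by simp
  -- integrability helper
  have hI : ∀ {f : Ω → ℝ} {C : ℝ}, AEStronglyMeasurable f μ →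
      (∀ᵐ ω ∂μ, |f ω| ≤ C) → Integrable f μ := by
    intro f C hf hb
    exact Integrable.mono' (integrable_const C) hf (by simpa [Real.norm_eq_abs] using hb)
  -- conditional expectation facts
  have hCEb : ∀ t b, ∀ᵐ ω ∂μ, |(μ[φth t b | H t]) ω| ≤ 1 + K := by
    intro t b
    have h := ae_bdd_condExp_of_ae_bdd (m := H t) (μ := μ)
      (R := ⟨1 + K, by positivity⟩) (f := φth t b)
      (Filter.Eventually.of_forall fun ω => by
        exact hφbdd t b ω)
    exact h
  have hCEm : ∀ t b, Measurable (μ[φth t b | H t]) := fun t b =>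
    stronglyMeasurable_condExp.measurable.mono (hHle t) le_rfl
  have hRhatMeasProd : ∀ t : ℕ, Measurable fun ω => ∏ u ∈ Finset.range t, rhat u ω :=
    fun t => Finset.measurable_prod _ (fun u _ => hrhatMeas u)
  have hRMeasProd : ∀ t : ℕ, Measurable fun ω => ∏ u ∈ Finset.range t, r u ω :=
    fun t => Finset.measurable_prod _ (fun u _ => hrMeas u)
  have hmAmb : ∀ t, t < T → ∀ b, Measurable (mhat t b) :=
    fun t ht b => (hmhatmeas t ht b).mono (hHle t) le_rfl
  -- key conditional expectation step
  have key : ∀ t, t < T → ∀ b : Bool,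
      ∫ ω, (∏ u ∈ Finset.range t, rhat u ω) * mhat t b ω * φth t b ω ∂μ
        = ∫ ω, (∏ u ∈ Finset.range t, rhat u ω) * mhat t b ω * (μ[φth t b | H t]) ω ∂μ := by
    intro t ht b
    set W : Ω → ℝ := fun ω => (∏ u ∈ Finset.range t, rhat u ω) * mhat t b ω with hWdef
    have hWm : Measurable[H t] W :=
      (Finset.measurable_prod _ (fun u hu => hrhH u t (Finset.mem_range.1 hu))).mul
        (hmhatmeas t ht b)
    have hWsm : StronglyMeasurable[H t] W := hWm.stronglyMeasurable
    have hWamb : Measurable W := hWm.mono (hHle t) le_rfl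
    have hWb : ∀ᵐ ω ∂μ, |W ω| ≤ Kh ^ t * Cm := by
      filter_upwards [hRhatB t, hCm t ht b] with ω h1 h2
      rw [hWdef, abs_mul]
      exact mul_le_mul h1 h2 (abs_nonneg _) (by positivity)
    have hφint : Integrable (φth t b) μ :=
      hI (hφMeas t b).aestronglyMeasurable (Filter.Eventually.of_forall (hφbdd t b))
    have hWφint : Integrable (W * φth t b) μ := by
      refine hI (C := (Kh ^ t * Cm) * (1 + K)) ((hWamb.mul (hφMeas t b)).aestronglyMeasurable) ?_
      filter_upwards [hWb] with ω h1
      calc |(W * φth t b) ω| = |W ω * φth t b ω| := rfl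
        _ ≤ (Kh ^ t * Cm) * (1 + K) := by
            rw [abs_mul]
            exact mul_le_mul h1 (hφbdd t b ω) (abs_nonneg _) ((abs_nonneg _).trans h1)
    have hmul := condExp_mul_of_stronglyMeasurable_left (μ := μ) hWsm hWφint hφint
    calc ∫ ω, (∏ u ∈ Finset.range t, rhat u ω) * mhat t b ω * φth t b ω ∂μ
        = ∫ ω, (W * φth t b) ω ∂μ := rfl
      _ = ∫ ω, (μ[W * φth t b | H t]) ω ∂μ := (integral_condExp (hHle t)).symm
      _ = ∫ ω, (W * μ[φth t b | H t]) ω ∂μ := integral_congr_ae hmul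
      _ = ∫ ω, (∏ u ∈ Finset.range t, rhat u ω) * mhat t b ω * (μ[φth t b | H t]) ω ∂μ := rfl
  -- expand Bool sums
  simp only [hφQh, Fintype.sum_bool]
  -- integrability of the LHS summands
  have hIntL : ∀ t ∈ Finset.range T, Integrable (fun ω =>
      (∏ u ∈ Finset.range t, rhat u ω)
        * (mhat t true ω * φth t true ω + mhat t false ω * φth t false ω)) μ := by
    intro t ht; rw [Finset.mem_range] at ht
    refine hI (C := Kh ^ t * (2 * (Cm * (1 + K)))) (((hRhatMeasProd t).mul
      (((hmAmb t ht true).mul (hφMeas t true)).add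
        ((hmAmb t ht false).mul (hφMeas t false)))).aestronglyMeasurable) ?_
    filter_upwards [hRhatB t, hCm t ht true, hCm t ht false] with ω h1 h2 h3
    exact abs_pair_bound h1 h2 h3 (hφbdd t true ω) (hφbdd t false ω)
  rw [integral_finset_sum _ hIntL]
  rw [← Finset.sum_add_distrib, ← Finset.sum_add_distrib]
  refine Finset.sum_congr rfl fun t ht => ?_
  rw [Finset.mem_range] at ht
  -- integrable pieces at time t
  have hIW : ∀ b : Bool, Integrable (fun ω =>
      (∏ u ∈ Finset.range t, rhat u ω) * mhat t b ω * φth t b ω) μ := by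
    intro b
    refine hI (C := Kh ^ t * Cm * (1 + K))
      ((((hRhatMeasProd t).mul (hmAmb t ht b)).mul (hφMeas t b)).aestronglyMeasurable) ?_
    filter_upwards [hRhatB t, hCm t ht b] with ω h1 h2
    exact abs_mul3 h1 h2 (hφbdd t b ω)
  have hIWCE : ∀ b : Bool, Integrable (fun ω =>
      (∏ u ∈ Finset.range t, rhat u ω) * mhat t b ω * (μ[φth t b | H t]) ω) μ := by
    intro b
    refine hI (C := Kh ^ t * Cm * (1 + K))
      ((((hRhatMeasProd t).mul (hmAmb t ht b)).mul (hCEm t b)).aestronglyMeasurable) ?_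
    filter_upwards [hRhatB t, hCm t ht b, hCEb t b] with ω h1 h2 h3
    exact abs_mul3 h1 h2 h3
  have hIA : Integrable (fun ω =>
      ((∏ u ∈ Finset.range t, rhat u ω) - (∏ u ∈ Finset.range t, r u ω))
        * (mhat t true ω * (μ[φth t true | H t]) ω
          + mhat t false ω * (μ[φth t false | H t]) ω)) μ := by
    refine hI (C := (Kh ^ t + Kr ^ t) * (2 * (Cm * (1 + K)))) ((((hRhatMeasProd t).sub (hRMeasProd t)).mul
      (((hmAmb t ht true).mul (hCEm t true)).add
        ((hmAmb t ht false).mul (hCEm t false)))).aestronglyMeasurable) ?_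
    filter_upwards [hRhatB t, hRB t, hCm t ht true, hCm t ht false, hCEb t true, hCEb t false]
      with ω h1 h2 h3 h4 h5 h6
    refine abs_pair_bound (X := Kh ^ t + Kr ^ t) ?_ h3 h4 h5 h6
    calc |(∏ u ∈ Finset.range t, rhat u ω) - (∏ u ∈ Finset.range t, r u ω)|
        ≤ |∏ u ∈ Finset.range t, rhat u ω| + |∏ u ∈ Finset.range t, r u ω| := abs_sub _ _
      _ ≤ Kh ^ t + Kr ^ t := add_le_add h1 h2
  have hIB : Integrable (fun ω =>
      (∏ u ∈ Finset.range t, r u ω)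
        * (mhat t true ω * ((μ[φth t true | H t]) ω + Qhat t true ω - Q t true ω)
          + mhat t false ω * ((μ[φth t false | H t]) ω + Qhat t false ω - Q t false ω))) μ := by
    refine hI (C := Kr ^ t * (2 * (Cm * ((1 + K) + 2 + 2)))) (((hRMeasProd t).mul
      (((hmAmb t ht true).mul (((hCEm t true).add (hQhatAmb t true)).sub (hQMeas t true))).add
        ((hmAmb t ht false).mul
          (((hCEm t false).add (hQhatAmb t false)).sub (hQMeas t false))))).aestronglyMeasurable) ?_
    filter_upwards [hRB t, hCm t ht true, hCm t ht false, hCEb t true, hCEb t false,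
      hQbdd t true, hQbdd t false] with ω h1 h2 h3 h4 h5 h6 h7
    refine abs_pair_bound (Cc := (1 + K) + 2 + 2) h1 h2 h3 ?_ ?_
    · have e1 := abs_le.1 h4; have e2 := abs_le.1 (hQhatbdd t true ω); have e3 := abs_le.1 h6
      exact abs_le.2 ⟨by linarith [e1.1, e2.1, e3.1, e3.2], by linarith [e1.2, e2.2, e3.1]⟩
    · have e1 := abs_le.1 h5; have e2 := abs_le.1 (hQhatbdd t false ω); have e3 := abs_le.1 h7
      exact abs_le.2 ⟨by linarith [e1.1, e2.1, e3.1, e3.2], by linarith [e1.2, e2.2, e3.1]⟩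
  have hIC : Integrable (fun ω =>
      (∏ u ∈ Finset.range t, r u ω)
        * (mhat t true ω * (Q t true ω - Qhat t true ω)
          + mhat t false ω * (Q t false ω - Qhat t false ω))) μ := by
    refine hI (C := Kr ^ t * (2 * (Cm * 4))) (((hRMeasProd t).mul
      (((hmAmb t ht true).mul ((hQMeas t true).sub (hQhatAmb t true))).add
        ((hmAmb t ht false).mul ((hQMeas t false).sub (hQhatAmb t false))))).aestronglyMeasurable) ?_
    filter_upwards [hRB t, hCm t ht true, hCm t ht false, hQbdd t true, hQbdd t false]
      with ω h1 h2 h3 h4 h5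
    refine abs_pair_bound (Cc := (4:ℝ)) h1 h2 h3 ?_ ?_
    · have e1 := abs_le.1 h4; have e2 := abs_le.1 (hQhatbdd t true ω)
      exact abs_le.2 ⟨by linarith [e1.1, e2.2], by linarith [e1.2, e2.1]⟩
    · have e1 := abs_le.1 h5; have e2 := abs_le.1 (hQhatbdd t false ω)
      exact abs_le.2 ⟨by linarith [e1.1, e2.2], by linarith [e1.2, e2.1]⟩
  -- now compute
  have e1 : (fun ω => (∏ u ∈ Finset.range t, rhat u ω)
      * (mhat t true ω * φth t true ω + mhat t false ω * φth t false ω))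
      = fun ω => (∏ u ∈ Finset.range t, rhat u ω) * mhat t true ω * φth t true ω
        + (∏ u ∈ Finset.range t, rhat u ω) * mhat t false ω * φth t false ω := by
    funext ω; ring
  rw [e1, integral_add (hIW true) (hIW false), key t ht true, key t ht false,
    ← integral_add (hIWCE true) (hIWCE false)]
  calc ∫ ω, ((∏ u ∈ Finset.range t, rhat u ω) * mhat t true ω * (μ[φth t true | H t]) ω
        + (∏ u ∈ Finset.range t, rhat u ω) * mhat t false ω * (μ[φth t false | H t]) ω) ∂μ
      = ∫ ω, (((∏ u ∈ Finset.range t, rhat u ω) - (∏ u ∈ Finset.range t, r u ω))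
            * (mhat t true ω * (μ[φth t true | H t]) ω
              + mhat t false ω * (μ[φth t false | H t]) ω)
          + ((∏ u ∈ Finset.range t, r u ω)
              * (mhat t true ω * ((μ[φth t true | H t]) ω + Qhat t true ω - Q t true ω)
                + mhat t false ω * ((μ[φth t false | H t]) ω + Qhat t false ω - Q t false ω))
            + (∏ u ∈ Finset.range t, r u ω)
              * (mhat t true ω * (Q t true ω - Qhat t true ω)
                + mhat t false ω * (Q t false ω - Qhat t false ω)))) ∂μ :=
        integral_congr_ae (Filter.Eventually.of_forall fun ω => by ring)
    _ = (∫ ω, ((∏ u ∈ Finset.range t, rhat u ω) - (∏ u ∈ Finset.range t, r u ω))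
            * (mhat t true ω * (μ[φth t true | H t]) ω
              + mhat t false ω * (μ[φth t false | H t]) ω) ∂μ)
          + ∫ ω, ((∏ u ∈ Finset.range t, r u ω)
              * (mhat t true ω * ((μ[φth t true | H t]) ω + Qhat t true ω - Q t true ω)
                + mhat t false ω * ((μ[φth t false | H t]) ω + Qhat t false ω - Q t false ω))
            + (∏ u ∈ Finset.range t, r u ω)
              * (mhat t true ω * (Q t true ω - Qhat t true ω)
                + mhat t false ω * (Q t false ω - Qhat t false ω))) ∂μ :=
        integral_add hIA (hIB.add hIC)
    _ = (∫ ω, ((∏ u ∈ Finset.range t, rhat u ω) - (∏ u ∈ Finset.range t, r u ω))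
            * (mhat t true ω * (μ[φth t true | H t]) ω
              + mhat t false ω * (μ[φth t false | H t]) ω) ∂μ)
          + ((∫ ω, (∏ u ∈ Finset.range t, r u ω)
              * (mhat t true ω * ((μ[φth t true | H t]) ω + Qhat t true ω - Q t true ω)
                + mhat t false ω * ((μ[φth t false | H t]) ω + Qhat t false ω
                  - Q t false ω)) ∂μ)
            + ∫ ω, (∏ u ∈ Finset.range t, r u ω)
              * (mhat t true ω * (Q t true ω - Qhat t true ω)
                + mhat t false ω * (Q t false ω - Qhat t false ω)) ∂μ) := by
        congr 1
        exact integral_add hIB hIC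
    _ = _ := (add_assoc _ _ _).symm
end

section
/- Forwards-in-time error decomposition of the weight component (Lemma forward-phi-error): E[φ̂_Q(Z)] = Σ_{t=1}^{T} E[ ( ∏_{s=0}^{t−1} r̂_s(A_s | H_s) )·Σ_{b∈{0,1}} ( m̂_t(b, H_t) − m_t(b, H_t) )·E(φ̂_t(b; A_t, H_t) | H_t) ] + Σ_{t=1}^{T} E[ ( ∏_{s=0}^{t−1} r̂_s(A_s | H_s) )·Σ_{b} m_t(b, H_t)·( Q̂_t(b | H_t) − Q_t(b | H_t) + E(φ̂_t(b; A_t, H_t) | H_t) ) ] + Σ_{t=1}^{T} E[ ( ∏_{s=0}^{t−1} r̂_s(A_s | H_s) )·Σ_{b} m_t(b, H_t)·( Q_t(b | H_t) − Q̂_t(b | H_t) ) ]. -/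
open MeasureTheory ProbabilityTheory

private lemma abs_mul_le' {x y a b : ℝ} (hx : |x| ≤ a) (hy : |y| ≤ b) : |x * y| ≤ a * b := by
  rw [abs_mul]
  exact mul_le_mul hx hy (abs_nonneg _) ((abs_nonneg x).trans hx)

private lemma abs_add_le' {x y a b : ℝ} (hx : |x| ≤ a) (hy : |y| ≤ b) : |x + y| ≤ a + b :=
  (abs_add_le _ _).trans (add_le_add hx hy)

private lemma abs_sub_le' {x y a b : ℝ} (hx : |x| ≤ a) (hy : |y| ≤ b) : |x - y| ≤ a + b := by
  rw [sub_eq_add_neg]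
  exact abs_add_le' hx (by rwa [abs_neg])

/-- **Forwards-in-time error decomposition of the weight component
(Lemma forward-phi-error).**  Times `1,…,T` of the paper are indexed by `0,…,T-1`;
the paper's products `∏_{s=0}^{t-1} r̂_s` (with `r̂_0 ≡ 1`) correspond to products over
`Finset.range t`. -/
theorem forwards_in_time_Q_decomposition
    {Ω : Type*} [MeasurableSpace Ω] (μ : Measure Ω) [IsProbabilityMeasure μ]
    (T d : ℕ) (hT : 1 ≤ T)
    (X : ℕ → Ω → (Fin d → ℝ)) (A : ℕ → Ω → Bool) (Y : Ω → ℝ)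
    (hX : ∀ t, Measurable (X t)) (hA : ∀ t, Measurable (A t))
    (hY : MemLp Y 2 μ)
    (a : ℕ → Bool)
    (s : ℕ → ℝ → ℝ) (hs : ∀ t, ContDiff ℝ 2 (s t))
    (hsbdd : ∃ K, ∀ t x, |deriv (s t) x| ≤ K ∧ |deriv (deriv (s t)) x| ≤ K)
    (hs01 : ∀ t, ∀ x ∈ Set.Icc (0:ℝ) 1, s t x ∈ Set.Icc (0:ℝ) 1)
    (H : ℕ → MeasurableSpace Ω)
    (hH : H = fun t =>
      (⨆ u ∈ Finset.range (t+1), MeasurableSpace.comap (X u) inferInstance)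
        ⊔ (⨆ u ∈ Finset.range t, MeasurableSpace.comap (A u) inferInstance))
    (p : ℕ → Bool → Ω → ℝ)
    (hp : p = fun t b => μ[(fun ω => if A t ω = b then (1:ℝ) else 0) | H t])
    (Q : ℕ → Bool → Ω → ℝ)
    (hQ : Q = fun t b ω => p t b ω
      + (if b = a t then (1:ℝ) else -1) * s t (p t (a t) ω) * (1 - p t (a t) ω))
    (r : ℕ → Ω → ℝ)
    (hr : r = fun t ω => Q t (A t ω) ω / p t (A t ω) ω)
    (hrbdd : ∃ K, ∀ t, ∀ᵐ ω ∂μ, |r t ω| ≤ K)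
    (m : ℕ → Bool → Ω → ℝ)
    (hmmeas : ∀ t < T, ∀ b, Measurable[H t] (m t b))
    (hmlast : (fun ω => m (T-1) (A (T-1) ω) ω)
      =ᵐ[μ] μ[Y | H (T-1) ⊔ MeasurableSpace.comap (A (T-1)) inferInstance])
    (hmrec : ∀ t, t + 1 < T →
      (fun ω => m t (A t ω) ω)
        =ᵐ[μ] μ[(fun ω => ∑ b : Bool, m (t+1) b ω * Q (t+1) b ω) |
            H t ⊔ MeasurableSpace.comap (A t) inferInstance])
    (m0 : ℝ) (hm0 : m0 = ∫ ω, ∑ b : Bool, m 0 b ω * Q 0 b ω ∂μ)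
    (pihat : ℕ → Ω → ℝ)
    (hpihatmeas : ∀ t, Measurable[H t] (pihat t))
    (hpihat01 : ∀ t ω, pihat t ω ∈ Set.Ioo (0:ℝ) 1)
    (phatb : ℕ → Bool → Ω → ℝ)
    (hphatb : phatb = fun t b ω => if b then pihat t ω else 1 - pihat t ω)
    (Qhat : ℕ → Bool → Ω → ℝ)
    (hQhat : Qhat = fun t b ω => phatb t b ω
      + (if b = a t then (1:ℝ) else -1) * s t (phatb t (a t) ω) * (1 - phatb t (a t) ω))
    (rhat : ℕ → Ω → ℝ)
    (hrhat : rhat = fun t ω => Qhat t (A t ω) ω / phatb t (A t ω) ω)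
    (hrhatbdd : ∃ K, ∀ t, ∀ᵐ ω ∂μ, |rhat t ω| ≤ K)
    (mhat : ℕ → Bool → Ω → ℝ)
    (hmhatmeas : ∀ t < T, ∀ b, Measurable[H t] (mhat t b))
    (hbdd : ∃ C, ∀ t < T, ∀ b, (∀ᵐ ω ∂μ, |m t b ω| ≤ C) ∧ (∀ᵐ ω ∂μ, |mhat t b ω| ≤ C))
    (φth : ℕ → Bool → Ω → ℝ)
    (hφth : φth = fun t b ω => (if b = a t then (1:ℝ) else -1)
      * ((if A t ω = a t then (1:ℝ) else 0) - phatb t (a t) ω)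
      * (1 - s t (phatb t (a t) ω)
          + deriv (s t) (phatb t (a t) ω) * (1 - phatb t (a t) ω)))
    (φQh : Ω → ℝ)
    (hφQh : φQh = fun ω => ∑ t ∈ Finset.range T, (∏ u ∈ Finset.range t, rhat u ω)
      * ∑ b : Bool, mhat t b ω * φth t b ω) :
    ∫ ω, φQh ω ∂μ
      = (∑ t ∈ Finset.range T, ∫ ω, (∏ u ∈ Finset.range t, rhat u ω)
          * ∑ b : Bool, (mhat t b ω - m t b ω) * (μ[φth t b | H t]) ω ∂μ)
      + (∑ t ∈ Finset.range T, ∫ ω, (∏ u ∈ Finset.range t, rhat u ω)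
          * ∑ b : Bool, m t b ω
              * (Qhat t b ω - Q t b ω + (μ[φth t b | H t]) ω) ∂μ)
      + ∑ t ∈ Finset.range T, ∫ ω, (∏ u ∈ Finset.range t, rhat u ω)
          * ∑ b : Bool, m t b ω * (Q t b ω - Qhat t b ω) ∂μ := by
  classical
  obtain ⟨K, hK⟩ := hrhatbdd
  obtain ⟨C, hC⟩ := hbdd
  obtain ⟨Ks, hKs⟩ := hsbdd
  haveI : Filter.NeBot (ae μ) := ae_neBot.mpr (IsProbabilityMeasure.ne_zero μ)
  have hK0 : 0 ≤ K := by
    obtain ⟨ω, hω⟩ := (hK 0).exists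
    exact (abs_nonneg _).trans hω
  have hKs0 : 0 ≤ Ks := (abs_nonneg _).trans (hKs 0 0).1
  -- sigma-algebra facts
  have hHle : ∀ t, H t ≤ (inferInstance : MeasurableSpace Ω) := by
    intro t
    rw [hH]
    exact sup_le (iSup₂_le fun u _ => (hX u).comap_le) (iSup₂_le fun u _ => (hA u).comap_le)
  have hHmono : ∀ u t : ℕ, u ≤ t → H u ≤ H t := by
    intro u t hut
    rw [hH]
    refine sup_le_sup ?_ ?_ <;>
      exact biSup_mono fun v hv => Finset.mem_range.2
        (by have := Finset.mem_range.1 hv; omega)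
  have hA_Ht : ∀ u t : ℕ, u < t → Measurable[H t] (A u) := by
    intro u t hut
    refine Measurable.of_comap_le ?_
    rw [hH]
    exact le_trans
      (le_iSup₂ (f := fun v (_ : v ∈ Finset.range t) =>
        MeasurableSpace.comap (A v) inferInstance) u (Finset.mem_range.2 hut))
      le_sup_right
  -- measurability facts
  have hpihatM_H : ∀ t u : ℕ, u ≤ t → Measurable[H t] (pihat u) :=
    fun t u h => (hpihatmeas u).mono (hHmono u t h) le_rfl
  have hphatbM_H : ∀ t u : ℕ, u ≤ t → ∀ b, Measurable[H t] (phatb u b) := by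
    intro t u h b
    simp only [hphatb]
    cases b
    · simpa using (hpihatM_H t u h).const_sub 1
    · simpa using hpihatM_H t u h
  have hsC : ∀ t, Continuous (s t) := fun t => (hs t).continuous
  have hs'C : ∀ t, Continuous (deriv (s t)) := fun t => (hs t).continuous_deriv one_le_two
  have hQhatM_H : ∀ t u : ℕ, u ≤ t → ∀ b, Measurable[H t] (Qhat u b) := by
    intro t u h b
    simp only [hQhat]
    exact (hphatbM_H t u h b).add
      ((((hsC u).measurable.comp (hphatbM_H t u h (a u))).const_mul _).mul
        (measurable_const.sub (hphatbM_H t u h (a u))))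
  have hrhatM_H : ∀ t u : ℕ, u < t → Measurable[H t] (rhat u) := by
    intro t u h
    have hre : rhat u = fun ω =>
        if A u ω = true then Qhat u true ω / phatb u true ω
        else Qhat u false ω / phatb u false ω := by
      funext ω
      rcases Bool.dichotomy (A u ω) with h' | h' <;> simp [hrhat, h']
    rw [hre]
    exact Measurable.ite (hA_Ht u t h (measurableSet_singleton true))
      ((hQhatM_H t u h.le true).div (hphatbM_H t u h.le true))
      ((hQhatM_H t u h.le false).div (hphatbM_H t u h.le false))
  have hrhatM : ∀ u, Measurable (rhat u) :=
    fun u => (hrhatM_H (u+1) u (Nat.lt_succ_self u)).mono (hHle (u+1)) le_rfl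
  have hPM_H : ∀ t, Measurable[H t] fun ω => ∏ u ∈ Finset.range t, rhat u ω :=
    fun t => Finset.measurable_prod _ fun u hu => hrhatM_H t u (Finset.mem_range.1 hu)
  have hPM : ∀ t, Measurable fun ω => ∏ u ∈ Finset.range t, rhat u ω :=
    fun t => Finset.measurable_prod _ fun u _ => hrhatM u
  have hφM : ∀ t b, Measurable (φth t b) := by
    intro t b
    simp only [hφth]
    have h1 : Measurable (phatb t (a t)) :=
      (hphatbM_H t t le_rfl (a t)).mono (hHle t) le_rfl
    have hind : Measurable fun ω => (if A t ω = a t then (1:ℝ) else 0) :=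
      Measurable.ite ((hA t) (measurableSet_singleton (a t))) measurable_const
        measurable_const
    exact ((hind.sub h1).const_mul _).mul
      ((measurable_const.sub ((hsC t).measurable.comp h1)).add
        (((hs'C t).measurable.comp h1).mul (measurable_const.sub h1)))
  have hpM : ∀ t b, Measurable (p t b) := by
    intro t b
    rw [hp]
    exact (stronglyMeasurable_condExp.mono (hHle t)).measurable
  have hQM : ∀ t b, Measurable (Q t b) := by
    intro t b
    simp only [hQ]
    exact (hpM t b).add
      ((((hsC t).measurable.comp (hpM t (a t))).const_mul _).mul
        (measurable_const.sub (hpM t (a t))))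
  have hQhatM : ∀ t b, Measurable (Qhat t b) :=
    fun t b => (hQhatM_H t t le_rfl b).mono (hHle t) le_rfl
  have hmM : ∀ t, t < T → ∀ b, Measurable (m t b) :=
    fun t ht b => (hmmeas t ht b).mono (hHle t) le_rfl
  have hmhatM : ∀ t, t < T → ∀ b, Measurable (mhat t b) :=
    fun t ht b => (hmhatmeas t ht b).mono (hHle t) le_rfl
  have heM : ∀ t b, Measurable (μ[φth t b | H t]) :=
    fun t b => (stronglyMeasurable_condExp.mono (hHle t)).measurable
  -- bounds
  have hphatb_true : ∀ t ω, phatb t true ω = pihat t ω := by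
    intro t ω; simp [hphatb]
  have hphatb_false : ∀ t ω, phatb t false ω = 1 - pihat t ω := by
    intro t ω; simp [hphatb]
  have hphat01 : ∀ t b ω, 0 ≤ phatb t b ω ∧ phatb t b ω ≤ 1 := by
    intro t b ω
    obtain ⟨h1, h2⟩ := hpihat01 t ω
    cases b
    · rw [hphatb_false]; constructor <;> linarith
    · rw [hphatb_true]; constructor <;> linarith
  have hφbdd : ∀ t b ω, |φth t b ω| ≤ 2 + Ks := by
    intro t b ω
    simp only [hφth]
    obtain ⟨hq0, hq1⟩ := hphat01 t (a t) ω
    obtain ⟨hs0, hs1⟩ := hs01 t (phatb t (a t) ω) ⟨hq0, hq1⟩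
    have hd := (hKs t (phatb t (a t) ω)).1
    have h1 : |(if b = a t then (1:ℝ) else -1)| ≤ 1 := by split_ifs <;> simp
    have h2 : |(if A t ω = a t then (1:ℝ) else 0) - phatb t (a t) ω| ≤ 1 := by
      split_ifs <;> (rw [abs_le]; constructor <;> linarith)
    have h3 : |1 - s t (phatb t (a t) ω)
        + deriv (s t) (phatb t (a t) ω) * (1 - phatb t (a t) ω)| ≤ 1 + Ks := by
      refine (abs_add_le _ _).trans (add_le_add ?_ ?_)
      · rw [abs_le]; constructor <;> linarith
      · calc |deriv (s t) (phatb t (a t) ω) * (1 - phatb t (a t) ω)|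
            ≤ Ks * 1 := abs_mul_le' hd (by rw [abs_le]; constructor <;> linarith)
          _ = Ks := mul_one Ks
    calc |(if b = a t then (1:ℝ) else -1)
          * ((if A t ω = a t then (1:ℝ) else 0) - phatb t (a t) ω)
          * (1 - s t (phatb t (a t) ω)
            + deriv (s t) (phatb t (a t) ω) * (1 - phatb t (a t) ω))|
        ≤ 1 * 1 * (1 + Ks) := abs_mul_le' (abs_mul_le' h1 h2) h3
      _ ≤ 2 + Ks := by linarith
  have hp01 : ∀ t b, ∀ᵐ ω ∂μ, 0 ≤ p t b ω ∧ p t b ω ≤ 1 := by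
    intro t b
    have hind : Integrable (fun ω => if A t ω = b then (1:ℝ) else 0) μ := by
      refine (integrable_const (1:ℝ)).mono' ?_ ?_
      · exact (Measurable.ite ((hA t) (measurableSet_singleton b)) measurable_const
          measurable_const).aestronglyMeasurable
      · refine Filter.Eventually.of_forall fun ω => ?_
        split_ifs <;> simp
    have h0 : 0 ≤ᵐ[μ] p t b := by
      rw [hp]
      exact condExp_nonneg (Filter.Eventually.of_forall fun ω => by
        dsimp; split_ifs <;> norm_num)
    have h1 : p t b ≤ᵐ[μ] fun _ => (1:ℝ) := by
      rw [hp]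
      have h2 := condExp_mono (μ := μ) (m := H t) hind (integrable_const (1:ℝ))
        (Filter.Eventually.of_forall fun ω => by dsimp; split_ifs <;> norm_num)
      rw [condExp_const (hHle t)] at h2
      exact h2
    filter_upwards [h0, h1] with ω h0' h1'
    exact ⟨h0', h1'⟩
  have hQbdd : ∀ t b, ∀ᵐ ω ∂μ, |Q t b ω| ≤ 2 := by
    intro t b
    filter_upwards [hp01 t b, hp01 t (a t)] with ω h1 h2
    obtain ⟨hb0, hb1⟩ := h1
    obtain ⟨ha0, ha1⟩ := h2
    obtain ⟨hs0, hs1⟩ := hs01 t (p t (a t) ω) ⟨ha0, ha1⟩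
    simp only [hQ]
    have hc : |(if b = a t then (1:ℝ) else -1)| ≤ 1 := by split_ifs <;> simp
    calc |p t b ω + (if b = a t then (1:ℝ) else -1) * s t (p t (a t) ω)
          * (1 - p t (a t) ω)|
        ≤ 1 + 1 * 1 * 1 := abs_add_le' (by rw [abs_le]; constructor <;> linarith)
          (abs_mul_le' (abs_mul_le' hc (by rw [abs_le]; constructor <;> linarith))
            (by rw [abs_le]; constructor <;> linarith))
      _ ≤ 2 := by norm_num
  have hQhatbdd : ∀ t b ω, |Qhat t b ω| ≤ 2 := by
    intro t b ω
    obtain ⟨hb0, hb1⟩ := hphat01 t b ω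
    obtain ⟨ha0, ha1⟩ := hphat01 t (a t) ω
    obtain ⟨hs0, hs1⟩ := hs01 t (phatb t (a t) ω) ⟨ha0, ha1⟩
    simp only [hQhat]
    have hc : |(if b = a t then (1:ℝ) else -1)| ≤ 1 := by split_ifs <;> simp
    calc |phatb t b ω + (if b = a t then (1:ℝ) else -1) * s t (phatb t (a t) ω)
          * (1 - phatb t (a t) ω)|
        ≤ 1 + 1 * 1 * 1 := abs_add_le' (by rw [abs_le]; constructor <;> linarith)
          (abs_mul_le' (abs_mul_le' hc (by rw [abs_le]; constructor <;> linarith))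
            (by rw [abs_le]; constructor <;> linarith))
      _ ≤ 2 := by norm_num
  have hPbdd : ∀ t, ∀ᵐ ω ∂μ, |∏ u ∈ Finset.range t, rhat u ω| ≤ K ^ t := by
    intro t
    have hall : ∀ᵐ ω ∂μ, ∀ u, |rhat u ω| ≤ K := ae_all_iff.2 hK
    filter_upwards [hall] with ω hω
    calc |∏ u ∈ Finset.range t, rhat u ω| = ∏ u ∈ Finset.range t, |rhat u ω| :=
          Finset.abs_prod _ _
      _ ≤ ∏ u ∈ Finset.range t, K :=
          Finset.prod_le_prod (fun u _ => abs_nonneg _) (fun u _ => hω u)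
      _ = K ^ t := by rw [Finset.prod_const, Finset.card_range]
  have hebdd : ∀ t b, ∀ᵐ ω ∂μ, |(μ[φth t b | H t]) ω| ≤ 2 + Ks := by
    intro t b
    have hb : ∀ᵐ ω ∂μ, |φth t b ω| ≤ ((⟨2 + Ks, by positivity⟩ : NNReal) : ℝ) :=
      Filter.Eventually.of_forall fun ω => by simpa using hφbdd t b ω
    have := ae_bdd_condExp_of_ae_bdd (m := H t) hb
    exact this
  -- integrability helper
  have hIntOf : ∀ (f : Ω → ℝ) (B : ℝ), Measurable f → (∀ᵐ ω ∂μ, |f ω| ≤ B) →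
      Integrable f μ := by
    intro f B hm hb
    refine (integrable_const B).mono' hm.aestronglyMeasurable ?_
    filter_upwards [hb] with ω h
    simpa [Real.norm_eq_abs] using h
  -- integrability of all integrands
  have hF0int : ∀ t, t < T → Integrable (fun ω => (∏ u ∈ Finset.range t, rhat u ω)
      * ∑ b : Bool, mhat t b ω * φth t b ω) μ := by
    intro t ht
    refine hIntOf _ (K ^ t * (C * (2 + Ks) + C * (2 + Ks)))
      ((hPM t).mul (Finset.measurable_sum _ fun b _ => (hmhatM t ht b).mul (hφM t b))) ?_
    filter_upwards [hPbdd t, (hC t ht true).2, (hC t ht false).2] with ω h1 h2 h3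
    refine abs_mul_le' h1 ?_
    rw [Fintype.sum_bool]
    exact abs_add_le' (abs_mul_le' h2 (hφbdd t true ω)) (abs_mul_le' h3 (hφbdd t false ω))
  have hGφint : ∀ t, t < T → ∀ b, Integrable
      (fun ω => ((∏ u ∈ Finset.range t, rhat u ω) * mhat t b ω) * φth t b ω) μ := by
    intro t ht b
    refine hIntOf _ ((K ^ t * C) * (2 + Ks))
      (((hPM t).mul (hmhatM t ht b)).mul (hφM t b)) ?_
    filter_upwards [hPbdd t, (hC t ht b).2] with ω h1 h2
    exact abs_mul_le' (abs_mul_le' h1 h2) (hφbdd t b ω)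
  have hGeint : ∀ t, t < T → ∀ b, Integrable
      (fun ω => ((∏ u ∈ Finset.range t, rhat u ω) * mhat t b ω)
        * (μ[φth t b | H t]) ω) μ := by
    intro t ht b
    refine hIntOf _ ((K ^ t * C) * (2 + Ks))
      (((hPM t).mul (hmhatM t ht b)).mul (heM t b)) ?_
    filter_upwards [hPbdd t, (hC t ht b).2, hebdd t b] with ω h1 h2 h3
    exact abs_mul_le' (abs_mul_le' h1 h2) h3
  have hF1int : ∀ t, t < T → Integrable (fun ω => (∏ u ∈ Finset.range t, rhat u ω)
      * ∑ b : Bool, (mhat t b ω - m t b ω) * (μ[φth t b | H t]) ω) μ := by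
    intro t ht
    refine hIntOf _ (K ^ t * ((C + C) * (2 + Ks) + (C + C) * (2 + Ks)))
      ((hPM t).mul (Finset.measurable_sum _ fun b _ =>
        ((hmhatM t ht b).sub (hmM t ht b)).mul (heM t b))) ?_
    filter_upwards [hPbdd t, (hC t ht true).1, (hC t ht true).2, (hC t ht false).1,
      (hC t ht false).2, hebdd t true, hebdd t false] with ω h1 h2 h3 h4 h5 h6 h7
    refine abs_mul_le' h1 ?_
    rw [Fintype.sum_bool]
    exact abs_add_le' (abs_mul_le' (abs_sub_le' h3 h2) h6)
      (abs_mul_le' (abs_sub_le' h5 h4) h7)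
  have hF2int : ∀ t, t < T → Integrable (fun ω => (∏ u ∈ Finset.range t, rhat u ω)
      * ∑ b : Bool, m t b ω
        * (Qhat t b ω - Q t b ω + (μ[φth t b | H t]) ω)) μ := by
    intro t ht
    refine hIntOf _ (K ^ t * (C * ((2 + 2) + (2 + Ks)) + C * ((2 + 2) + (2 + Ks))))
      ((hPM t).mul (Finset.measurable_sum _ fun b _ => (hmM t ht b).mul
        (((hQhatM t b).sub (hQM t b)).add (heM t b)))) ?_
    filter_upwards [hPbdd t, (hC t ht true).1, (hC t ht false).1, hQbdd t true,
      hQbdd t false, hebdd t true, hebdd t false] with ω h1 h2 h3 h4 h5 h6 h7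
    refine abs_mul_le' h1 ?_
    rw [Fintype.sum_bool]
    exact abs_add_le'
      (abs_mul_le' h2 (abs_add_le' (abs_sub_le' (hQhatbdd t true ω) h4) h6))
      (abs_mul_le' h3 (abs_add_le' (abs_sub_le' (hQhatbdd t false ω) h5) h7))
  have hF3int : ∀ t, t < T → Integrable (fun ω => (∏ u ∈ Finset.range t, rhat u ω)
      * ∑ b : Bool, m t b ω * (Q t b ω - Qhat t b ω)) μ := by
    intro t ht
    refine hIntOf _ (K ^ t * (C * (2 + 2) + C * (2 + 2)))
      ((hPM t).mul (Finset.measurable_sum _ fun b _ => (hmM t ht b).mul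
        ((hQM t b).sub (hQhatM t b)))) ?_
    filter_upwards [hPbdd t, (hC t ht true).1, (hC t ht false).1, hQbdd t true,
      hQbdd t false] with ω h1 h2 h3 h4 h5
    refine abs_mul_le' h1 ?_
    rw [Fintype.sum_bool]
    exact abs_add_le'
      (abs_mul_le' h2 (abs_sub_le' h4 (hQhatbdd t true ω)))
      (abs_mul_le' h3 (abs_sub_le' h5 (hQhatbdd t false ω)))
  -- the key conditional-expectation step
  have hkey : ∀ t, t < T → ∀ b : Bool,
      ∫ ω, ((∏ u ∈ Finset.range t, rhat u ω) * mhat t b ω) * φth t b ω ∂μ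
        = ∫ ω, ((∏ u ∈ Finset.range t, rhat u ω) * mhat t b ω)
            * (μ[φth t b | H t]) ω ∂μ := by
    intro t ht b
    set g : Ω → ℝ := fun ω => (∏ u ∈ Finset.range t, rhat u ω) * mhat t b ω with hg
    have hgSM : StronglyMeasurable[H t] g :=
      ((hPM_H t).mul (hmhatmeas t ht b)).stronglyMeasurable
    have hφint : Integrable (φth t b) μ :=
      hIntOf _ (2 + Ks) (hφM t b) (Filter.Eventually.of_forall (hφbdd t b))
    have hgφint : Integrable (g * φth t b) μ := hGφint t ht b
    have hmul := condExp_mul_of_stronglyMeasurable_left hgSM hgφint hφint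
    calc ∫ ω, g ω * φth t b ω ∂μ
        = ∫ ω, (μ[g * φth t b | H t]) ω ∂μ :=
          (integral_condExp (hHle t) (f := g * φth t b)).symm
      _ = ∫ ω, (g * μ[φth t b | H t]) ω ∂μ := integral_congr_ae hmul
      _ = ∫ ω, g ω * (μ[φth t b | H t]) ω ∂μ := rfl
  -- per-time identity
  have hmain : ∀ t, t < T →
      ∫ ω, (∏ u ∈ Finset.range t, rhat u ω) * ∑ b : Bool, mhat t b ω * φth t b ω ∂μ
        = (∫ ω, (∏ u ∈ Finset.range t, rhat u ω)
            * ∑ b : Bool, (mhat t b ω - m t b ω) * (μ[φth t b | H t]) ω ∂μ)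
          + (∫ ω, (∏ u ∈ Finset.range t, rhat u ω)
            * ∑ b : Bool, m t b ω
                * (Qhat t b ω - Q t b ω + (μ[φth t b | H t]) ω) ∂μ)
          + ∫ ω, (∏ u ∈ Finset.range t, rhat u ω)
            * ∑ b : Bool, m t b ω * (Q t b ω - Qhat t b ω) ∂μ := by
    intro t ht
    have e1 : (fun ω => (∏ u ∈ Finset.range t, rhat u ω)
        * ∑ b : Bool, mhat t b ω * φth t b ω)
        = fun ω => ((∏ u ∈ Finset.range t, rhat u ω) * mhat t true ω) * φth t true ω
          + ((∏ u ∈ Finset.range t, rhat u ω) * mhat t false ω) * φth t false ω := by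
      funext ω; rw [Fintype.sum_bool]; ring
    have e2 : (fun ω => ((∏ u ∈ Finset.range t, rhat u ω) * mhat t true ω)
          * (μ[φth t true | H t]) ω
        + ((∏ u ∈ Finset.range t, rhat u ω) * mhat t false ω)
          * (μ[φth t false | H t]) ω)
        = fun ω => (∏ u ∈ Finset.range t, rhat u ω)
          * ∑ b : Bool, mhat t b ω * (μ[φth t b | H t]) ω := by
      funext ω; rw [Fintype.sum_bool]; ring
    have e3 : (fun ω => ((∏ u ∈ Finset.range t, rhat u ω)
          * ∑ b : Bool, (mhat t b ω - m t b ω) * (μ[φth t b | H t]) ω)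
        + ((∏ u ∈ Finset.range t, rhat u ω)
          * ∑ b : Bool, m t b ω
              * (Qhat t b ω - Q t b ω + (μ[φth t b | H t]) ω))
        + ((∏ u ∈ Finset.range t, rhat u ω)
          * ∑ b : Bool, m t b ω * (Q t b ω - Qhat t b ω)))
        = fun ω => (∏ u ∈ Finset.range t, rhat u ω)
          * ∑ b : Bool, mhat t b ω * (μ[φth t b | H t]) ω := by
      funext ω
      simp only [Fintype.sum_bool]
      ring
    have hsum3 : (∫ ω, (∏ u ∈ Finset.range t, rhat u ω)
            * ∑ b : Bool, (mhat t b ω - m t b ω) * (μ[φth t b | H t]) ω ∂μ)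
          + (∫ ω, (∏ u ∈ Finset.range t, rhat u ω)
            * ∑ b : Bool, m t b ω
                * (Qhat t b ω - Q t b ω + (μ[φth t b | H t]) ω) ∂μ)
          + (∫ ω, (∏ u ∈ Finset.range t, rhat u ω)
            * ∑ b : Bool, m t b ω * (Q t b ω - Qhat t b ω) ∂μ)
        = ∫ ω, (∏ u ∈ Finset.range t, rhat u ω)
            * ∑ b : Bool, mhat t b ω * (μ[φth t b | H t]) ω ∂μ := by
      have h12 : Integrable (fun ω => (∏ u ∈ Finset.range t, rhat u ω)
            * (∑ b : Bool, (mhat t b ω - m t b ω) * (μ[φth t b | H t]) ω)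
          + (∏ u ∈ Finset.range t, rhat u ω)
            * ∑ b : Bool, m t b ω
                * (Qhat t b ω - Q t b ω + (μ[φth t b | H t]) ω)) μ :=
        (hF1int t ht).add (hF2int t ht)
      rw [← integral_add (hF1int t ht) (hF2int t ht),
        ← integral_add h12 (hF3int t ht)]
      exact integral_congr_ae (Filter.Eventually.of_forall fun ω =>
        congrFun e3 ω)
    rw [hsum3]
    calc ∫ ω, (∏ u ∈ Finset.range t, rhat u ω)
          * ∑ b : Bool, mhat t b ω * φth t b ω ∂μ
        = ∫ ω, ((∏ u ∈ Finset.range t, rhat u ω) * mhat t true ω) * φth t true ω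
            + ((∏ u ∈ Finset.range t, rhat u ω) * mhat t false ω) * φth t false ω ∂μ := by
          rw [e1]
      _ = (∫ ω, ((∏ u ∈ Finset.range t, rhat u ω) * mhat t true ω) * φth t true ω ∂μ)
            + ∫ ω, ((∏ u ∈ Finset.range t, rhat u ω) * mhat t false ω)
                * φth t false ω ∂μ :=
          integral_add (hGφint t ht true) (hGφint t ht false)
      _ = (∫ ω, ((∏ u ∈ Finset.range t, rhat u ω) * mhat t true ω)
              * (μ[φth t true | H t]) ω ∂μ)
            + ∫ ω, ((∏ u ∈ Finset.range t, rhat u ω) * mhat t false ω)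
                * (μ[φth t false | H t]) ω ∂μ := by
          rw [hkey t ht true, hkey t ht false]
      _ = ∫ ω, ((∏ u ∈ Finset.range t, rhat u ω) * mhat t true ω)
              * (μ[φth t true | H t]) ω
            + ((∏ u ∈ Finset.range t, rhat u ω) * mhat t false ω)
              * (μ[φth t false | H t]) ω ∂μ :=
          (integral_add (hGeint t ht true) (hGeint t ht false)).symm
      _ = ∫ ω, (∏ u ∈ Finset.range t, rhat u ω)
            * ∑ b : Bool, mhat t b ω * (μ[φth t b | H t]) ω ∂μ := by
          rw [e2]
  -- assemble
  calc ∫ ω, φQh ω ∂μ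
      = ∑ t ∈ Finset.range T, ∫ ω, (∏ u ∈ Finset.range t, rhat u ω)
          * ∑ b : Bool, mhat t b ω * φth t b ω ∂μ := by
        rw [hφQh]
        exact integral_finset_sum _ fun t ht => hF0int t (Finset.mem_range.1 ht)
    _ = ∑ t ∈ Finset.range T,
          ((∫ ω, (∏ u ∈ Finset.range t, rhat u ω)
            * ∑ b : Bool, (mhat t b ω - m t b ω) * (μ[φth t b | H t]) ω ∂μ)
          + (∫ ω, (∏ u ∈ Finset.range t, rhat u ω)
            * ∑ b : Bool, m t b ω
                * (Qhat t b ω - Q t b ω + (μ[φth t b | H t]) ω) ∂μ)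
          + ∫ ω, (∏ u ∈ Finset.range t, rhat u ω)
            * ∑ b : Bool, m t b ω * (Q t b ω - Qhat t b ω) ∂μ) :=
        Finset.sum_congr rfl fun t ht => hmain t (Finset.mem_range.1 ht)
    _ = _ := by rw [Finset.sum_add_distrib, Finset.sum_add_distrib]
end
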